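/- arXiv:1810.08270 — 4 statements merged into one kernel-verified Lean document; each statement's English description precedes it below -/
import Mathlib

section
/- Let S be a real-valued random variable on a probability space, let 𝒢 be a sub-σ-algebra, and let L > 0. Then there exists a real A such that, setting B = A + L and T' = A if S ≤ A, T' = B if S ≥ B, and T' = S otherwise, the number (A + B)/2 is a median of the random variable E[T' | 𝒢] (i.e., P(E[T'|𝒢] ≤ (A+B)/2) ≥ 1/2 and P(E[T'|𝒢] ≥ (A+B)/2) ≥ 1/2). -/
open MeasureTheory ProbabilityTheory Filter Set
open scoped ENNReal Topology

noncomputable section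

namespace FPPPaper

/-- Vertices of the lattice `ℤ^d`. -/
abbrev V (d : ℕ) := Fin d → ℤ

/-- A nearest-neighbor edge of `ℤ^d`, encoded as its base vertex together with the
coordinate direction: `(v, i)` is the edge joining `v` and `v + eᵢ`. -/
abbrev Edge (d : ℕ) := (Fin d → ℤ) × Fin d

/-- The `i`-th coordinate unit vector. -/
def unitVec (d : ℕ) (i : Fin d) : V d := fun j => if j = i then 1 else 0

/-- Embedding of a lattice point into Euclidean space (so that `‖emb v‖` is the
Euclidean norm of `v`). -/
def emb {d : ℕ} (v : V d) : EuclideanSpace ℝ (Fin d) := WithLp.toLp 2 (fun i => (v i : ℝ))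

/-- The sup norm `‖v‖_∞` of a lattice point. -/
def normInf {d : ℕ} (v : V d) : ℝ := ‖(fun i => (v i : ℝ) : Fin d → ℝ)‖

/-- A (finite) lattice path from `x` to `y`: a sequence of vertices in which consecutive
vertices are nearest neighbors. -/
structure LPath (d : ℕ) (x y : V d) where
  n : ℕ
  f : Fin (n + 1) → V d
  first : f 0 = x
  last : f (Fin.last n) = y
  adj : ∀ i : Fin n,
    (∃ j, f i.succ = f i.castSucc + unitVec d j) ∨ (∃ j, f i.castSucc = f i.succ + unitVec d j)

/-- The edge traversed by the path at step `i`. -/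
def edgeAt {d : ℕ} {x y : V d} (p : LPath d x y) (i : Fin p.n) : Edge d :=
  if h : ∃ j, p.f i.succ = p.f i.castSucc + unitVec d j then (p.f i.castSucc, h.choose)
  else (p.f i.succ, ((p.adj i).resolve_left h).choose)

/-- The passage time `T(Γ) = ∑_{e ∈ Γ} t_e` of a path. -/
def pathTime {d : ℕ} {x y : V d} (t : Edge d → ℝ) (p : LPath d x y) : ℝ :=
  ∑ i : Fin p.n, t (edgeAt p i)

/-- The first-passage time `T(x,y) = inf_Γ T(Γ)`. -/
def T {d : ℕ} (t : Edge d → ℝ) (x y : V d) : ℝ := ⨅ p : LPath d x y, pathTime t p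

/-- A geodesic is a path realizing the first-passage time. -/
def IsGeodesic {d : ℕ} (t : Edge d → ℝ) {x y : V d} (p : LPath d x y) : Prop :=
  pathTime t p = T t x y

/-- The edge `e` appears on the path `p`. -/
def onPath {d : ℕ} {x y : V d} (p : LPath d x y) (e : Edge d) : Prop := ∃ i, edgeAt p i = e

/-- The number of hi-mode edges (edges with `t e > d0`) on the path `p` lying in the set `A`. -/
def hiCountIn {d : ℕ} {x y : V d} (t : Edge d → ℝ) (d0 : ℝ) (p : LPath d x y)
    (A : Set (Edge d)) : ℕ :=
  Set.ncard {e : Edge d | e ∈ A ∧ onPath p e ∧ d0 < t e}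

/-- The number of hi-mode edges (edges with `t e > d0`) on the path `p`. -/
def hiCount {d : ℕ} {x y : V d} (t : Edge d → ℝ) (d0 : ℝ) (p : LPath d x y) : ℕ :=
  Set.ncard {e : Edge d | onPath p e ∧ d0 < t e}

/-- `e` has both endpoints in the box `[-r, r]^d`. -/
def edgeInBox {d : ℕ} (r : ℝ) (e : Edge d) : Prop :=
  (∀ i, |((e.1 : V d) i : ℝ)| ≤ r) ∧ (∀ i, |(((e.1 + unitVec d e.2) : V d) i : ℝ)| ≤ r)

/-- The annulus `A(j)`: `A(1) = ℬ(1)` and `A(j) = ℬ(j) \ ℬ(j-1)` for `j ≥ 2`, where `ℬ(j)`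
is the set of edges with both endpoints in `[-K^j, K^j]^d`. -/
def annulus (d : ℕ) (K : ℝ) (j : ℕ) : Set (Edge d) :=
  {e | edgeInBox (K ^ j) e ∧ (2 ≤ j → ¬ edgeInBox (K ^ (j - 1)) e)}

/-- The line through `0` and `x`. -/
def lineThrough {d : ℕ} (x : V d) : Set (EuclideanSpace ℝ (Fin d)) :=
  {z | ∃ s : ℝ, z = s • emb x}

/-- `v` lies in the cylinder `C(x; α)` of Euclidean width `‖x‖^α` around the line through
`0` and `x`. -/
def inCylinder {d : ℕ} (α : ℝ) (x v : V d) : Prop :=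
  Metric.infDist (emb v) (lineThrough x) ≤ ‖emb x‖ ^ α

/-- Both endpoints of `e` lie in the cylinder `C(x;α)`. -/
def edgeInCyl {d : ℕ} (α : ℝ) (x : V d) (e : Edge d) : Prop :=
  inCylinder α x e.1 ∧ inCylinder α x (e.1 + unitVec d e.2)

/-- Lattice paths from `0` to `x` staying inside the cylinder `C(x;α)`. -/
def CylPath (d : ℕ) (α : ℝ) (x : V d) := {p : LPath d 0 x // ∀ k, inCylinder α x (p.f k)}

/-- The restricted cylinder passage time `T(0, x; α)`. -/
def Tcyl {d : ℕ} (t : Edge d → ℝ) (α : ℝ) (x : V d) : ℝ := ⨅ p : CylPath d α x, pathTime t p.1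

/-- A geodesic for the cylinder passage time. -/
def IsCylGeodesic {d : ℕ} (t : Edge d → ℝ) (α : ℝ) (x : V d) (p : CylPath d α x) : Prop :=
  pathTime t p.1 = Tcyl t α x

/-- There is an infinite oriented open path started at the origin. -/
def OrientedPercolates (d : ℕ) (op : Edge d → Prop) : Prop :=
  ∃ γ : ℕ → V d, γ 0 = 0 ∧ ∀ k, ∃ i, γ (k + 1) = γ k + unitVec d i ∧ op (γ k, i)

/-- The origin lies in an infinite open cluster. -/
def Percolates (d : ℕ) (op : Edge d → Prop) : Prop :=
  ∃ γ : ℕ → V d, Function.Injective γ ∧ γ 0 = 0 ∧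
    ∀ k, (∃ i, γ (k + 1) = γ k + unitVec d i ∧ op (γ k, i)) ∨
      (∃ i, γ k = γ (k + 1) + unitVec d i ∧ op (γ (k + 1), i))

/-- The critical probability `p⃗_c(d)` of oriented bond percolation on `ℤ^d`: the supremum
of those `p` for which any i.i.d. Bernoulli(`p`) family of open edges a.s. produces no
infinite oriented open path from the origin. -/
def dirPc (d : ℕ) : ℝ :=
  sSup {p : ℝ | 0 ≤ p ∧ p ≤ 1 ∧
    ∀ (Ω : Type) (_ : MeasurableSpace Ω) (μ : Measure Ω), IsProbabilityMeasure μ →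
      ∀ E : Edge d → Set Ω, (∀ e, MeasurableSet (E e)) → iIndepSet E μ →
        (∀ e, μ (E e) = ENNReal.ofReal p) →
          μ {ω | OrientedPercolates d fun e => ω ∈ E e} = 0}

/-- The critical probability `p_c(d)` of bond percolation on `ℤ^d`. -/
def bondPc (d : ℕ) : ℝ :=
  sSup {p : ℝ | 0 ≤ p ∧ p ≤ 1 ∧
    ∀ (Ω : Type) (_ : MeasurableSpace Ω) (μ : Measure Ω), IsProbabilityMeasure μ →
      ∀ E : Edge d → Set Ω, (∀ e, MeasurableSet (E e)) → iIndepSet E μ →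
        (∀ e, μ (E e) = ENNReal.ofReal p) →
          μ {ω | Percolates d fun e => ω ∈ E e} = 0}

/-- `I = inf supp F`, the infimum of the support of the distribution function `F`. -/
def suppInf (F : ℝ → ℝ) : ℝ := sInf {x : ℝ | 0 < F x}

/-- Condition (1.1): `F(0) < p_c = 1/2` and `F(I) < p⃗_c` if `I > 0`. -/
def Cond11 (F : ℝ → ℝ) : Prop :=
  F 0 < 1 / 2 ∧ (0 < suppInf F → F (suppInf F) < dirPc 2)

/-- `F` is the common distribution function of the family `t`. -/
def IsCDF {Ω : Type} [MeasurableSpace Ω] (μ : Measure Ω) {ι : Type*} (t : ι → Ω → ℝ)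
    (F : ℝ → ℝ) : Prop :=
  ∀ e r, μ {ω | t e ω ≤ r} = ENNReal.ofReal (F r)

/-- The filter `‖x‖ → ∞` on `ℤ^d`. -/
def toInfty (d : ℕ) : Filter (V d) := Filter.comap (fun x : V d => ‖emb x‖) Filter.atTop

/-- `m` is a median of the random variable `X`. -/
def IsMedian {Ω : Type} [MeasurableSpace Ω] (μ : Measure Ω) (X : Ω → ℝ) (m : ℝ) : Prop :=
  (1 : ℝ≥0∞) / 2 ≤ μ {ω | X ω ≤ m} ∧ (1 : ℝ≥0∞) / 2 ≤ μ {ω | m ≤ X ω}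

/-- Truncation of `s` to the interval `[a, b]`. -/
def clamp (a b s : ℝ) : ℝ := max a (min b s)

/-- The number of hi-mode weights among the edges of `A`. -/
def hiNumIn {Ω : Type} (t : Edge 2 → Ω → ℝ) (d0 : ℝ) (A : Set (Edge 2)) (ω : Ω) : ℕ :=
  Set.ncard {e : Edge 2 | e ∈ A ∧ d0 < t e ω}

/-- The σ-algebra `σ(N⃗)` generated by the numbers of hi-mode weights in the given
family of edge sets. -/
def sigmaFam {Ω : Type} (t : Edge 2 → Ω → ℝ) (d0 : ℝ) (As : ℕ → Set (Edge 2)) :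
    MeasurableSpace Ω :=
  MeasurableSpace.comap (fun ω (j : ℕ) => hiNumIn t d0 (As j) ω) MeasurableSpace.pi

/-- The σ-algebra `σ(N⃗)` generated by the numbers of hi-mode weights in the annuli. -/
def sigmaHi {Ω : Type} (t : Edge 2 → Ω → ℝ) (d0 K : ℝ) : MeasurableSpace Ω :=
  sigmaFam t d0 (annulus 2 K)

/-- Conditional probability of the event `E` given the σ-algebra `G`. -/
def condProb {Ω : Type} [MeasurableSpace Ω] (μ : Measure Ω) (G : MeasurableSpace Ω)
    (E : Set Ω) : Ω → ℝ :=
  μ[E.indicator (fun _ => (1 : ℝ)) | G]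

/-- `√(log ‖x‖)`. -/
def slog {d : ℕ} (x : V d) : ℝ := Real.sqrt (Real.log ‖emb x‖)

/-- `M_n = (A_n + B_n)/2` where `B_n = A_n + s`. -/
def MnOf (A s : ℝ) : ℝ := (A + (A + s)) / 2

/-- The interval `I_n' = [M - s/4, M + s/4]`. -/
def In' (M s : ℝ) : Set ℝ := Set.Icc (M - s / 4) (M + s / 4)

/-- The event `E_n(j)`: every geodesic from `0` to `x` has at least `K^{j-1}` hi-mode
edges in the annulus `A(j)`. -/
def geodHiEvent {Ω : Type} (t : Edge 2 → Ω → ℝ) (d0 K : ℝ) (x : V 2) (j : ℕ) : Set Ω :=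
  {ω | ∀ p : LPath 2 0 x, IsGeodesic (fun e => t e ω) p →
    (K ^ (j - 1) : ℝ) ≤ (hiCountIn (fun e => t e ω) d0 p (annulus 2 K j) : ℝ)}

/-- `j ∈ [0.25 log_K ‖x‖_∞, 0.75 log_K ‖x‖_∞]`. -/
def jRange (K : ℝ) (x : V 2) (j : ℕ) : Prop :=
  0.25 * Real.logb K (normInf x) ≤ (j : ℝ) ∧ (j : ℝ) ≤ 0.75 * Real.logb K (normInf x)

/-- The event `{N⃗ ∈ 𝒩_n}` that the value of `N⃗` is good (Definition 2.4). -/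
def goodEvent {Ω : Type} [MeasurableSpace Ω] (μ : Measure Ω) (t : Edge 2 → Ω → ℝ)
    (d0 K : ℝ) (x : V 2) (ξ : ℝ) (I : Set ℝ) : Set Ω :=
  {ω | 1 - ξ < condProb μ (sigmaHi t d0 K) {ω' | T (fun e => t e ω') 0 x ∈ I} ω ∧
    ∀ j : ℕ, jRange K x j →
      1 - ξ < condProb μ (sigmaHi t d0 K) (geodHiEvent t d0 K x j) ω}

/-- `k₀ = ⌊log_K ‖x‖_∞⌋`. -/
def k0 (K : ℝ) (x : V 2) : ℕ := (⌊Real.logb K (normInf x)⌋).toNat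

/-- The event that every cylinder geodesic from `0` to `x` has at least `c‖x‖` hi-mode
edges in the annulus `A(k₀)`. -/
def cylGeodHiEvent {Ω : Type} (t : Edge 2 → Ω → ℝ) (d0 K c α : ℝ) (x : V 2) : Set Ω :=
  {ω | ∀ p : CylPath 2 α x, IsCylGeodesic (fun e => t e ω) α x p →
    c * ‖emb x‖ ≤ (hiCountIn (fun e => t e ω) d0 p.1 (annulus 2 K (k0 K x)) : ℝ)}

/-- The σ-algebra generated by the numbers of hi-mode weights in the annuli portions
`A(j) ∩ C(x;α)`. -/
def cylSigma {Ω : Type} (t : Edge 2 → Ω → ℝ) (d0 K α : ℝ) (x : V 2) : MeasurableSpace Ω :=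
  sigmaFam t d0 (fun j => annulus 2 K j ∩ {e | edgeInCyl α x e})

/-- The good event in the cylinder setting. -/
def cylGoodEvent {Ω : Type} [MeasurableSpace Ω] (μ : Measure Ω) (t : Edge 2 → Ω → ℝ)
    (d0 K c α : ℝ) (x : V 2) (ξ : ℝ) (I : Set ℝ) : Set Ω :=
  {ω | 1 - ξ < condProb μ (cylSigma t d0 K α x) {ω' | Tcyl (fun e => t e ω') α x ∈ I} ω ∧
    1 - ξ < condProb μ (cylSigma t d0 K α x) (cylGeodHiEvent t d0 K c α x) ω}

/-- The open cluster of `v`: all vertices joined to `v` by an open path. -/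
def openCluster {d : ℕ} (op : Edge d → Prop) (v : V d) : Set (V d) :=
  {u | ∃ p : LPath d v u, ∀ i, op (edgeAt p i)}

/-- `v` belongs to an infinite open cluster. -/
def InInfiniteCluster {d : ℕ} (op : Edge d → Prop) (v : V d) : Prop :=
  (openCluster op v).Infinite

lemma le_clamp (A L s : ℝ) : A ≤ clamp A (A + L) s := le_max_left _ _

lemma clamp_le (A L s : ℝ) (hL : 0 ≤ L) : clamp A (A + L) s ≤ A + L :=
  max_le (by linarith) (min_le_left _ _)

lemma clamp_mono (A A' L s : ℝ) (h : A ≤ A') :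
    clamp A (A + L) s ≤ clamp A' (A' + L) s := by
  simp only [clamp, max_def, min_def]; split_ifs <;> linarith

lemma clamp_lip (A A' L s : ℝ) (hL : 0 ≤ L) (h : A ≤ A') :
    clamp A' (A' + L) s ≤ clamp A (A + L) s + (A' - A) := by
  simp only [clamp, max_def, min_def]; split_ifs <;> linarith

lemma clamp_of_le (A L s : ℝ) (hL : 0 ≤ L) (h : s ≤ A) : clamp A (A + L) s = A := by
  simp only [clamp, max_def, min_def]; split_ifs <;> linarith

lemma clamp_of_ge (A L s : ℝ) (hL : 0 ≤ L) (h : A + L ≤ s) : clamp A (A + L) s = A + L := by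
  simp only [clamp, max_def, min_def]; split_ifs <;> linarith

lemma half_le_aux {Ω : Type} {_mΩ : MeasurableSpace Ω} (μ : Measure Ω) [IsProbabilityMeasure μ]
    {s t : Set Ω} (h : s ∪ t = Set.univ)  (ht : μ t ≤ 1 / 2) : (1 : ℝ≥0∞) / 2 ≤ μ s := by
  have h1 : (1 : ℝ≥0∞) ≤ μ s + μ t := by
    rw [show (1 : ℝ≥0∞) = μ Set.univ by simp, ← h]; exact measure_union_le _ _
  have h2 : (1 : ℝ≥0∞) ≤ μ s + 1 / 2 := h1.trans (add_le_add_right ht _)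
  have h3 : (1 : ℝ≥0∞) - 1 / 2 ≤ μ s := tsub_le_iff_right.mpr h2
  have h4 : (1 : ℝ≥0∞) - 1 / 2 = 1 / 2 := by rw [ENNReal.sub_half ENNReal.one_ne_top]
  rwa [h4] at h3

lemma ennhalf_toReal : ((1 : ℝ≥0∞) / 2).toReal = 1 / 2 := by simp

lemma le_half_of_toReal {x : ℝ≥0∞} (hx : x ≠ ⊤) (h : x.toReal ≤ 1 / 2) : x ≤ 1 / 2 := by
  rw [← ENNReal.toReal_le_toReal hx (by norm_num : (1 : ℝ≥0∞) / 2 ≠ ⊤), ennhalf_toReal]; exact h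

lemma lt_half_of_toReal {x : ℝ≥0∞} (hx : x ≠ ⊤) (h : x.toReal < 1 / 2) : x < 1 / 2 := by
  rw [← ENNReal.toReal_lt_toReal hx (by norm_num : (1 : ℝ≥0∞) / 2 ≠ ⊤), ennhalf_toReal]; exact h


/-- **Lemma 2.1 (truncation lemma).** For a random variable `S`, a sub-σ-algebra `G` and
`L > 0`, there is `A ∈ ℝ` such that, with `B = A + L` and `T'` the truncation of `S` to
`[A, B]`, the number `(A+B)/2` is a median of `E[T' | G]`. -/
theorem statement3 {Ω : Type} [m0 : MeasurableSpace Ω] (μ : Measure Ω)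
    [IsProbabilityMeasure μ]
    (S : Ω → ℝ) (hS : Measurable S)
    (G : MeasurableSpace Ω) (hG : G ≤ m0)
    (L : ℝ) (hL : 0 < L) :
    ∃ A : ℝ, @IsMedian Ω m0 μ (μ[fun ω => clamp A (A + L) (S ω) | G]) ((A + (A + L)) / 2) := by
  have hL0 : (0:ℝ) ≤ L := hL.le
  set f : ℝ → Ω → ℝ := fun A ω => clamp A (A + L) (S ω) with hf
  set W : ℝ → Ω → ℝ := fun A => μ[f A | G] with hW
  have hfmeas : ∀ A, Measurable[m0] (f A) := fun A =>
    measurable_const.max (measurable_const.min hS)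
  have hInt : ∀ A, Integrable (f A) μ := by
    intro A
    refine (integrable_const (|A| + L)).mono' (hfmeas A).aestronglyMeasurable
      (Filter.Eventually.of_forall fun ω => ?_)
    rw [Real.norm_eq_abs]
    have h1 := le_clamp A L (S ω)
    have h2 := clamp_le A L (S ω) hL0
    rw [abs_le]
    constructor
    · have := neg_abs_le A; simp only [hf]; linarith
    · have := le_abs_self A; simp only [hf]; linarith
  have hWmeas : ∀ A, Measurable[m0] (W A) := fun A =>
    ((stronglyMeasurable_condExp (m := G)).mono hG).measurable
  have hWint : ∀ A, Integrable (W A) μ := fun A => integrable_condExp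
  -- a.e. bounds on W
  have hbd : ∀ A, ∀ᵐ ω ∂μ, A ≤ W A ω ∧ W A ω ≤ A + L := by
    intro A
    have h1 : μ[(fun _ => A) | G] ≤ᵐ[μ] W A :=
      condExp_mono (integrable_const A) (hInt A)
        (Filter.Eventually.of_forall fun ω => le_clamp A L (S ω))
    have h2 : W A ≤ᵐ[μ] μ[(fun _ => (A + L)) | G] :=
      condExp_mono (hInt A) (integrable_const (A + L))
        (Filter.Eventually.of_forall fun ω => clamp_le A L (S ω) hL0)
    rw [condExp_const hG] at h1
    rw [condExp_const hG] at h2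
    filter_upwards [h1, h2] with ω ha hb
    exact ⟨ha, hb⟩
  -- monotonicity and Lipschitz
  have hmono : ∀ A A', A ≤ A' → ∀ᵐ ω ∂μ, W A ω ≤ W A' ω :=
    fun A A' h => condExp_mono (hInt A) (hInt A')
      (Filter.Eventually.of_forall fun ω => clamp_mono A A' L (S ω) h)
  have hlip : ∀ A A', A ≤ A' → ∀ᵐ ω ∂μ, W A' ω ≤ W A ω + (A' - A) := by
    intro A A' h
    have h1 : μ[f A' | G] ≤ᵐ[μ] μ[(fun ω => f A ω + (A' - A)) | G] :=
      condExp_mono (hInt A') ((hInt A).add (integrable_const (A' - A)))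
        (Filter.Eventually.of_forall fun ω => clamp_lip A A' L (S ω) hL0 h)
    have h2 : μ[(fun ω => f A ω + (A' - A)) | G]
        =ᵐ[μ] fun ω => (μ[f A | G]) ω + (A' - A) := by
      have := condExp_add (μ := μ) (m := G) (hInt A) (integrable_const (A' - A))
      refine this.trans ?_
      rw [condExp_const hG]
      rfl
    filter_upwards [h1, h2] with ω ha hb
    exact le_of_le_of_eq ha hb
  -- integrals
  set u : ℝ → ℝ := fun A => (∫ ω, f A ω ∂μ) - A with hu
  have hWu : ∀ A, ∫ ω, (W A ω - A) ∂μ = u A := by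
    intro A
    rw [integral_sub (hWint A) (integrable_const A), integral_const]
    simp only [hW]
    rw [integral_condExp hG]
    simp [hu]
  have hW'u : ∀ A, ∫ ω, (A + L - W A ω) ∂μ = L - u A := by
    intro A
    rw [integral_sub (integrable_const (A + L)) (hWint A), integral_const]
    simp only [hW]
    rw [integral_condExp hG]
    simp [hu]
    ring
  -- limits of u
  have hItop : Tendsto u atTop (𝓝 0) := by
    have h0 : Tendsto (fun A : ℝ => ∫ ω, (f A ω - A) ∂μ) atTop (𝓝 (∫ _ω, (0:ℝ) ∂μ)) := by
      apply tendsto_integral_filter_of_dominated_convergence (fun _ => L)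
      · exact Filter.Eventually.of_forall fun A =>
          ((hfmeas A).sub measurable_const).aestronglyMeasurable
      · refine Filter.Eventually.of_forall fun A => Filter.Eventually.of_forall fun ω => ?_
        rw [Real.norm_eq_abs, abs_le]
        have h1 := le_clamp A L (S ω)
        have h2 := clamp_le A L (S ω) hL0
        constructor <;> simp only [hf] <;> linarith
      · exact integrable_const L
      · refine Filter.Eventually.of_forall fun ω => ?_
        have hev : ∀ᶠ A in (atTop : Filter ℝ), f A ω - A = 0 :=
          (eventually_ge_atTop (S ω)).mono fun A hA => by
            simp only [hf]; rw [clamp_of_le A L (S ω) hL0 hA]; ring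
        exact tendsto_const_nhds.congr' (hev.mono fun A h => h.symm)
    rw [integral_zero] at h0
    refine h0.congr fun A => ?_
    rw [integral_sub (hInt A) (integrable_const A), integral_const]
    simp [hu]
  have hIbot : Tendsto u atBot (𝓝 L) := by
    have h0 : Tendsto (fun A : ℝ => ∫ ω, (f A ω - A) ∂μ) atBot (𝓝 (∫ _ω, (L:ℝ) ∂μ)) := by
      apply tendsto_integral_filter_of_dominated_convergence (fun _ => L)
      · exact Filter.Eventually.of_forall fun A =>
          ((hfmeas A).sub measurable_const).aestronglyMeasurable
      · refine Filter.Eventually.of_forall fun A => Filter.Eventually.of_forall fun ω => ?_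
        rw [Real.norm_eq_abs, abs_le]
        have h1 := le_clamp A L (S ω)
        have h2 := clamp_le A L (S ω) hL0
        constructor <;> simp only [hf] <;> linarith
      · exact integrable_const L
      · refine Filter.Eventually.of_forall fun ω => ?_
        have hev : ∀ᶠ A in (atBot : Filter ℝ), f A ω - A = L :=
          (eventually_le_atBot (S ω - L)).mono fun A hA => by
            simp only [hf]; rw [clamp_of_ge A L (S ω) hL0 (by linarith)]; ring
        exact tendsto_const_nhds.congr' (hev.mono fun A h => h.symm)
    have : ∫ _ω, (L:ℝ) ∂μ = L := by simp
    rw [this] at h0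
    refine h0.congr fun A => ?_
    rw [integral_sub (hInt A) (integrable_const A), integral_const]
    simp [hu]
  -- Markov inequalities
  have hMark1 : ∀ A, (L / 2) * (μ {ω | A + L / 2 ≤ W A ω}).toReal ≤ u A := by
    intro A
    have hnn : 0 ≤ᵐ[μ] fun ω => W A ω - A := (hbd A).mono fun ω h => by
      simp only [Pi.zero_apply]; linarith [h.1]
    have := mul_meas_ge_le_integral_of_nonneg hnn ((hWint A).sub (integrable_const A)) (L / 2)
    rw [hWu A] at this
    have hset : {x | L / 2 ≤ W A x - A} = {ω | A + L / 2 ≤ W A ω} := by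
      ext ω; simp only [Set.mem_setOf_eq]; constructor <;> intro <;> linarith
    rwa [hset] at this
  have hMark2 : ∀ A, (L / 2) * (μ {ω | W A ω ≤ A + L / 2}).toReal ≤ L - u A := by
    intro A
    have hnn : 0 ≤ᵐ[μ] fun ω => A + L - W A ω := (hbd A).mono fun ω h => by
      simp only [Pi.zero_apply]; linarith [h.2]
    have := mul_meas_ge_le_integral_of_nonneg hnn
      ((integrable_const (A + L)).sub (hWint A)) (L / 2)
    rw [hW'u A] at this
    have hset : {x | L / 2 ≤ A + L - W A x} = {ω | W A ω ≤ A + L / 2} := by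
      ext ω; simp only [Set.mem_setOf_eq]; constructor <;> intro <;> linarith
    rwa [hset] at this
  -- the set M
  set M : Set ℝ := {A | (1 : ℝ≥0∞) / 2 ≤ μ {ω | W A ω ≤ A + L / 2}} with hM
  have hup : ∀ {A A'}, A ≤ A' → A ∈ M → A' ∈ M := by
    intro A A' h hA
    refine le_trans hA (measure_mono_ae ?_)
    filter_upwards [hlip A A' h] with ω hω hmem
    have hm : W A ω ≤ A + L / 2 := hmem
    show W A' ω ≤ A' + L / 2
    linarith
  have hMne : M.Nonempty := by
    obtain ⟨A₁, hA₁⟩ : ∃ A : ℝ, u A < L / 4 :=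
      (hItop.eventually (gt_mem_nhds (by linarith : (0:ℝ) < L / 4))).exists
    refine ⟨A₁, ?_⟩
    have hmark := hMark1 A₁
    have htr : (μ {ω | A₁ + L / 2 ≤ W A₁ ω}).toReal ≤ 1 / 2 := by nlinarith
    have hle : μ {ω | A₁ + L / 2 ≤ W A₁ ω} ≤ 1 / 2 :=
      le_half_of_toReal (measure_ne_top μ _) htr
    exact half_le_aux μ (by ext ω; simp [le_total]) hle
  have hMbdd : BddBelow M := by
    obtain ⟨A₀, hA₀⟩ : ∃ A : ℝ, L - L / 4 < u A :=
      (hIbot.eventually (lt_mem_nhds (by linarith : L - L / 4 < L))).exists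
    have hA₀M : A₀ ∉ M := by
      intro hmem
      have hmark := hMark2 A₀
      have htr : (μ {ω | W A₀ ω ≤ A₀ + L / 2}).toReal < 1 / 2 := by nlinarith
      have hlt : μ {ω | W A₀ ω ≤ A₀ + L / 2} < 1 / 2 :=
        lt_half_of_toReal (measure_ne_top μ _) htr
      exact absurd hmem (not_le.mpr hlt)
    exact ⟨A₀, fun a ha => le_of_not_gt fun h => hA₀M (hup h.le ha)⟩
  set Astar := sInf M with hAstar
  refine ⟨Astar, ?_, ?_⟩
  -- Part 1
  · have hring : (Astar + (Astar + L)) / 2 = Astar + L / 2 := by ring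
    rw [hring]
    set An : ℕ → ℝ := fun n => Astar + 1 / ((n : ℝ) + 1) with hAn'
    have hpos : ∀ n : ℕ, (0:ℝ) < 1 / ((n : ℝ) + 1) := fun n => by positivity
    have hAstarle : ∀ n : ℕ, Astar ≤ An n := fun n => by
      simp only [hAn']; linarith [hpos n]
    have hAnmono : ∀ n : ℕ, An (n + 1) ≤ An n := by
      intro n
      have h1 : (1:ℝ) / ((n:ℝ) + 1 + 1) ≤ 1 / ((n:ℝ) + 1) :=
        one_div_le_one_div_of_le (by positivity) (by linarith)
      simp only [hAn']
      push_cast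
      linarith
    have hAnM : ∀ n : ℕ, An n ∈ M := by
      intro n
      obtain ⟨a, haM, halt⟩ := (csInf_lt_iff hMbdd hMne).mp
        (show sInf M < An n by simp only [hAn']; linarith [hpos n])
      exact hup halt.le haM
    have hprop : ∀ᵐ ω ∂μ, ∀ n : ℕ, (W Astar ω ≤ W (An n) ω) ∧
        (W (An n) ω ≤ W (An (n + 1)) ω + (An n - An (n + 1))) := by
      rw [ae_all_iff]
      exact fun n => (hmono Astar (An n) (hAstarle n)).and
        (hlip (An (n + 1)) (An n) (hAnmono n))
    obtain ⟨N, hNsub, hNmeas, hNnull⟩ := @exists_measurable_superset_of_null Ω m0 μ _ (ae_iff.mp hprop)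
    have hgood : ∀ ω, ω ∉ N → ∀ n : ℕ, (W Astar ω ≤ W (An n) ω) ∧
        (W (An n) ω ≤ W (An (n + 1)) ω + (An n - An (n + 1))) := by
      intro ω hω
      by_contra hc
      exact hω (hNsub hc)
    set E : ℕ → Set Ω := fun n => {ω | W (An n) ω ≤ An n + L / 2} \ N with hE
    have hEmeas : ∀ n, MeasurableSet[m0] (E n) := fun n =>
      (measurableSet_le (hWmeas _) measurable_const).diff hNmeas
    have hEanti : Antitone E := by
      refine antitone_nat_of_succ_le fun n ω hω => ?_
      have h1 : W (An (n + 1)) ω ≤ An (n + 1) + L / 2 := hω.1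
      have h2 := (hgood ω hω.2 n).2
      refine ⟨?_, hω.2⟩
      show W (An n) ω ≤ An n + L / 2
      calc W (An n) ω ≤ W (An (n + 1)) ω + (An n - An (n + 1)) := h2
        _ ≤ (An (n + 1) + L / 2) + (An n - An (n + 1)) := add_le_add_left h1 _
        _ = An n + L / 2 := by ring
    have h12 : ∀ n, (1 : ℝ≥0∞) / 2 ≤ μ (E n) := fun n => by
      rw [hE]; rw [measure_diff_null hNnull]; exact hAnM n
    have hInter : μ (⋂ n, E n) = ⨅ n, μ (E n) :=
      Directed.measure_iInter (fun n => (hEmeas n).nullMeasurableSet)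
        (hEanti.directed_ge) ⟨0, measure_ne_top μ _⟩
    have hsub : (⋂ n, E n) ⊆ {ω | W Astar ω ≤ Astar + L / 2} := by
      intro ω hω
      have hωn : ∀ n, ω ∈ E n := Set.mem_iInter.mp hω
      have hN' : ω ∉ N := (hωn 0).2
      show W Astar ω ≤ Astar + L / 2
      by_contra hc
      push_neg at hc
      obtain ⟨n, hn⟩ := exists_nat_one_div_lt (show (0:ℝ) < W Astar ω - (Astar + L / 2) by
        linarith)
      have h1 : W Astar ω ≤ W (An n) ω := (hgood ω hN' n).1
      have h2 : W (An n) ω ≤ An n + L / 2 := (hωn n).1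
      have h3 : An n = Astar + 1 / ((n : ℝ) + 1) := rfl
      linarith
    have hfin : (1 : ℝ≥0∞) / 2 ≤ μ (⋂ n, E n) := by
      rw [hInter]; exact le_iInf h12
    exact hfin.trans (measure_mono hsub)
  -- Part 2
  · have hring : (Astar + (Astar + L)) / 2 = Astar + L / 2 := by ring
    rw [hring]
    set Bn : ℕ → ℝ := fun n => Astar - 1 / ((n : ℝ) + 1) with hBn'
    have hpos : ∀ n : ℕ, (0:ℝ) < 1 / ((n : ℝ) + 1) := fun n => by positivity
    have hBnle : ∀ n : ℕ, Bn n ≤ Astar := fun n => by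
      simp only [hBn']; linarith [hpos n]
    have hBnmono : ∀ n : ℕ, Bn n ≤ Bn (n + 1) := by
      intro n
      have h1 : (1:ℝ) / ((n:ℝ) + 1 + 1) ≤ 1 / ((n:ℝ) + 1) :=
        one_div_le_one_div_of_le (by positivity) (by linarith)
      simp only [hBn']
      push_cast
      linarith
    have hBnM : ∀ n : ℕ, Bn n ∉ M := by
      intro n h
      have h1 : Astar ≤ Bn n := csInf_le hMbdd h
      have h2 : Bn n < Astar := by simp only [hBn']; linarith [hpos n]
      exact absurd h1 (not_le.mpr h2)
    have hF12 : ∀ n : ℕ, (1 : ℝ≥0∞) / 2 ≤ μ {ω | Bn n + L / 2 ≤ W (Bn n) ω} := by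
      intro n
      have hle : μ {ω | W (Bn n) ω ≤ Bn n + L / 2} ≤ 1 / 2 := (not_le.mp (hBnM n)).le
      exact half_le_aux μ (by ext ω; simp [le_total]) hle
    have hprop : ∀ᵐ ω ∂μ, ∀ n : ℕ, (W (Bn n) ω ≤ W Astar ω) ∧
        (W (Bn (n + 1)) ω ≤ W (Bn n) ω + (Bn (n + 1) - Bn n)) := by
      rw [ae_all_iff]
      exact fun n => (hmono (Bn n) Astar (hBnle n)).and
        (hlip (Bn n) (Bn (n + 1)) (hBnmono n))
    obtain ⟨N, hNsub, hNmeas, hNnull⟩ := @exists_measurable_superset_of_null Ω m0 μ _ (ae_iff.mp hprop)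
    have hgood : ∀ ω, ω ∉ N → ∀ n : ℕ, (W (Bn n) ω ≤ W Astar ω) ∧
        (W (Bn (n + 1)) ω ≤ W (Bn n) ω + (Bn (n + 1) - Bn n)) := by
      intro ω hω
      by_contra hc
      exact hω (hNsub hc)
    set F : ℕ → Set Ω := fun n => {ω | Bn n + L / 2 ≤ W (Bn n) ω} \ N with hF
    have hFmeas : ∀ n, MeasurableSet[m0] (F n) := fun n =>
      (measurableSet_le measurable_const (hWmeas _)).diff hNmeas
    have hFanti : Antitone F := by
      refine antitone_nat_of_succ_le fun n ω hω => ?_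
      have h1 : Bn (n + 1) + L / 2 ≤ W (Bn (n + 1)) ω := hω.1
      have h2 := (hgood ω hω.2 n).2
      refine ⟨?_, hω.2⟩
      show Bn n + L / 2 ≤ W (Bn n) ω
      have h4 : Bn (n + 1) + L / 2 - (Bn (n + 1) - Bn n) ≤ W (Bn n) ω := by
        have := sub_le_sub_right h2 (Bn (n + 1) - Bn n)
        have h5 := sub_le_sub_right h1 (Bn (n + 1) - Bn n)
        calc Bn (n + 1) + L / 2 - (Bn (n + 1) - Bn n)
            ≤ W (Bn (n + 1)) ω - (Bn (n + 1) - Bn n) := h5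
          _ ≤ W (Bn n) ω := by linarith [h2]
      calc Bn n + L / 2 = Bn (n + 1) + L / 2 - (Bn (n + 1) - Bn n) := by ring
        _ ≤ W (Bn n) ω := h4
    have h12 : ∀ n, (1 : ℝ≥0∞) / 2 ≤ μ (F n) := fun n => by
      rw [hF]; rw [measure_diff_null hNnull]; exact hF12 n
    have hInter : μ (⋂ n, F n) = ⨅ n, μ (F n) :=
      Directed.measure_iInter (fun n => (hFmeas n).nullMeasurableSet)
        (hFanti.directed_ge) ⟨0, measure_ne_top μ _⟩
    have hsub : (⋂ n, F n) ⊆ {ω | Astar + L / 2 ≤ W Astar ω} := by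
      intro ω hω
      have hωn : ∀ n, ω ∈ F n := Set.mem_iInter.mp hω
      have hN' : ω ∉ N := (hωn 0).2
      show Astar + L / 2 ≤ W Astar ω
      by_contra hc
      push_neg at hc
      obtain ⟨n, hn⟩ := exists_nat_one_div_lt (show (0:ℝ) < Astar + L / 2 - W Astar ω by
        linarith)
      have h1 : W (Bn n) ω ≤ W Astar ω := (hgood ω hN' n).1
      have h2 : Bn n + L / 2 ≤ W (Bn n) ω := (hωn n).1
      have h3 : Bn n = Astar - 1 / ((n : ℝ) + 1) := rfl
      linarith
    have hfin : (1 : ℝ≥0∞) / 2 ≤ μ (⋂ n, F n) := by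
      rw [hInter]; exact le_iInf h12
    exact hfin.trans (measure_mono hsub)


end FPPPaper
end
end

section
/- Let W be a real-valued random variable with distribution function F_W, let F_W^{-1}(t) = inf{x : F_W(x) ≥ t} be its generalized inverse, and let U be uniform on [0,1]. Let X be a random variable with the law of F_W^{-1}(U) conditioned on {U ≤ 1/2}, let Z be an independent random variable with the law of F_W^{-1}(U) conditioned on {U ≥ 1/2}, and let η be an independent Bernoulli(1/2) random variable (P(η=0)=P(η=1)=1/2). Then X + η(Z − X) has the same distribution as W, and P(X ≤ Z) = 1. -/
open MeasureTheory ProbabilityTheory Filter Set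
open scoped ENNReal Topology

noncomputable section

namespace FPPPaper

/-- **The decomposition (2.decomposition).** Let `W` have distribution function `F_W` with
generalized inverse `F_W⁻¹(t) = inf {x : F_W(x) ≥ t}`. If `X` has the law of `F_W⁻¹(U)`
conditioned on `{U ≤ 1/2}` (`U` uniform on `[0,1]`), `Z` the law of `F_W⁻¹(U)` conditioned
on `{U ≥ 1/2}`, `η` is Bernoulli(1/2), and `X, Z, η` are independent, then
`X + η(Z - X) =ᵈ W` and `ℙ(X ≤ Z) = 1`. -/
theorem statement10 {Ω : Type} [MeasurableSpace Ω] (μ : Measure Ω) [IsProbabilityMeasure μ]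
    (W : Ω → ℝ) (hW : Measurable W)
    (Finv : ℝ → ℝ)
    (hFinv : ∀ u : ℝ, Finv u = sInf {x : ℝ | u ≤ (μ {ω | W ω ≤ x}).toReal})
    (X Z η : Ω → ℝ) (hX : Measurable X) (hZ : Measurable Z) (hη : Measurable η)
    (hlawX : μ.map X =
      (2 : ℝ≥0∞) • (volume.restrict (Set.Icc (0 : ℝ) (1 / 2))).map Finv)
    (hlawZ : μ.map Z =
      (2 : ℝ≥0∞) • (volume.restrict (Set.Icc (1 / 2 : ℝ) 1)).map Finv)
    (hη1 : μ {ω | η ω = 1} = 1 / 2) (hη0 : μ {ω | η ω = 0} = 1 / 2)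
    (hindep : iIndepFun ![X, Z, η] μ) :
    μ.map (fun ω => X ω + η ω * (Z ω - X ω)) = μ.map W ∧
    μ {ω | X ω ≤ Z ω} = 1 := by
  classical
  obtain ⟨F, hFdef⟩ : ∃ F : ℝ → ℝ, F = fun x => (μ {ω | W ω ≤ x}).toReal := ⟨_, rfl⟩
  have hFinv' : ∀ u : ℝ, Finv u = sInf {x : ℝ | u ≤ F x} := by
    intro u; simp only [hFdef]; exact hFinv u
  have hmW : ∀ x : ℝ, MeasurableSet {ω | W ω ≤ x} := fun x => hW measurableSet_Iic
  have hne_top : ∀ x : ℝ, μ {ω | W ω ≤ x} ≠ ⊤ := fun x => measure_ne_top μ _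
  have hFofReal : ∀ x : ℝ, ENNReal.ofReal (F x) = μ {ω | W ω ≤ x} := by
    intro x; simp only [hFdef]; exact ENNReal.ofReal_toReal (hne_top x)
  have hFmono : Monotone F := by
    intro a b hab
    simp only [hFdef]
    exact ENNReal.toReal_mono (hne_top b) (measure_mono fun ω h => le_trans h hab)
  have hF0 : ∀ x, 0 ≤ F x := by intro x; simp only [hFdef]; exact ENNReal.toReal_nonneg
  have hF1 : ∀ x, F x ≤ 1 := by
    intro x
    simp only [hFdef]
    have h1 : μ {ω | W ω ≤ x} ≤ 1 := prob_le_one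
    have := ENNReal.toReal_mono ENNReal.one_ne_top h1
    simpa using this
  -- right continuity of F
  have hrc : ∀ y u : ℝ, (∀ z, y < z → u ≤ F z) → u ≤ F y := by
    intro y u h
    rcases le_or_gt u 0 with h0 | h0
    · exact h0.trans (hF0 y)
    have hset : {ω | W ω ≤ y} = ⋂ n : ℕ, {ω | W ω ≤ y + 1 / (n + 1)} := by
      ext ω
      simp only [Set.mem_setOf_eq, Set.mem_iInter]
      constructor
      · intro hw n
        have hp : (0:ℝ) < 1/((n:ℝ)+1) := by positivity
        linarith
      · intro hw
        by_contra hlt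
        push_neg at hlt
        obtain ⟨n, hn⟩ := exists_nat_one_div_lt (sub_pos.mpr hlt)
        have := hw n
        linarith
    have hanti : Antitone fun n : ℕ => {ω | W ω ≤ y + 1 / ((n:ℝ) + 1)} := by
      intro a b hab ω hω
      simp only [Set.mem_setOf_eq] at hω ⊢
      have hcast : (a:ℝ) + 1 ≤ (b:ℝ) + 1 := by exact_mod_cast Nat.succ_le_succ hab
      have h1 : (1:ℝ)/((b:ℝ)+1) ≤ 1/((a:ℝ)+1) :=
        one_div_le_one_div_of_le (by positivity) hcast
      linarith
    have hiInf : μ {ω | W ω ≤ y} = ⨅ n : ℕ, μ {ω | W ω ≤ y + 1 / ((n:ℝ) + 1)} := by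
      rw [hset]
      exact hanti.measure_iInter (fun n => (hmW _).nullMeasurableSet) ⟨0, hne_top _⟩
    have hle : ENNReal.ofReal u ≤ μ {ω | W ω ≤ y} := by
      rw [hiInf]
      refine le_iInf fun n => ?_
      rw [← hFofReal]
      exact ENNReal.ofReal_le_ofReal (h _ (lt_add_of_pos_right y (by positivity)))
    rw [← hFofReal y] at hle
    exact (ENNReal.ofReal_le_ofReal_iff (hF0 y)).mp hle
  -- bddBelow of the defining sets
  have hbdd : ∀ u : ℝ, 0 < u → BddBelow {x : ℝ | u ≤ F x} := by
    intro u hu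
    have hinter : (⋂ n : ℕ, {ω | W ω ≤ -(n:ℝ)}) = ∅ := by
      ext ω
      simp only [Set.mem_iInter, Set.mem_setOf_eq, Set.mem_empty_iff_false, iff_false,
        not_forall, not_le]
      obtain ⟨n, hn⟩ := exists_nat_gt (-(W ω))
      exact ⟨n, by linarith⟩
    have hanti : Antitone fun n : ℕ => {ω | W ω ≤ -(n:ℝ)} := by
      intro a b hab ω hω
      simp only [Set.mem_setOf_eq] at hω ⊢
      have : (a:ℝ) ≤ b := by exact_mod_cast hab
      linarith
    have h0 : (⨅ n : ℕ, μ {ω | W ω ≤ -(n:ℝ)}) = 0 := by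
      rw [← hanti.measure_iInter (fun n => (hmW _).nullMeasurableSet) ⟨0, hne_top _⟩, hinter,
        measure_empty]
    have hlt : (⨅ n : ℕ, μ {ω | W ω ≤ -(n:ℝ)}) < ENNReal.ofReal u := by
      rw [h0]; exact ENNReal.ofReal_pos.mpr hu
    obtain ⟨n, hn⟩ := iInf_lt_iff.mp hlt
    refine ⟨-(n:ℝ), fun x hx => ?_⟩
    by_contra hxn
    push_neg at hxn
    have hFx : F x ≤ F (-(n:ℝ)) := hFmono hxn.le
    have hFn : F (-(n:ℝ)) < u := by
      have h2 : (μ {ω | W ω ≤ -(n:ℝ)}).toReal < (ENNReal.ofReal u).toReal :=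
        ENNReal.toReal_strict_mono ENNReal.ofReal_ne_top hn
      rw [ENNReal.toReal_ofReal hu.le] at h2
      simpa only [hFdef] using h2
    have : u ≤ F x := hx
    linarith
  -- the key characterization of the generalized inverse
  have hinvle : ∀ u y : ℝ, 0 < u → {x : ℝ | u ≤ F x}.Nonempty → (Finv u ≤ y ↔ u ≤ F y) := by
    intro u y hu hne
    rw [hFinv']
    constructor
    · intro h
      refine hrc y u fun z hz => ?_
      obtain ⟨x, hxS, hxz⟩ := exists_lt_of_csInf_lt hne (lt_of_le_of_lt h hz)
      exact le_trans hxS (hFmono hxz.le)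
    · intro h
      exact csInf_le (hbdd u hu) h
  -- F tends to 1
  have hex : ∀ u : ℝ, u < 1 → ∃ x : ℝ, u ≤ F x := by
    have huniv : (⋃ n : ℕ, {ω | W ω ≤ (n:ℝ)}) = Set.univ := by
      ext ω
      simp only [Set.mem_iUnion, Set.mem_setOf_eq, Set.mem_univ, iff_true]
      obtain ⟨n, hn⟩ := exists_nat_ge (W ω)
      exact ⟨n, hn⟩
    have hmono : Monotone fun n : ℕ => {ω | W ω ≤ (n:ℝ)} := by
      intro a b hab ω hω
      simp only [Set.mem_setOf_eq] at hω ⊢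
      have : (a:ℝ) ≤ b := by exact_mod_cast hab
      linarith
    have hsup : (⨆ n : ℕ, μ {ω | W ω ≤ (n:ℝ)}) = 1 := by
      rw [← hmono.measure_iUnion, huniv, measure_univ]
    intro u hu
    rcases le_or_gt u 0 with h0 | h0
    · exact ⟨0, h0.trans (hF0 0)⟩
    have hlt : ENNReal.ofReal u < ⨆ n : ℕ, μ {ω | W ω ≤ (n:ℝ)} := by
      rw [hsup]; exact ENNReal.ofReal_lt_one.mpr hu
    obtain ⟨n, hn⟩ := lt_iSup_iff.mp hlt
    refine ⟨(n:ℝ), ?_⟩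
    have h2 : (ENNReal.ofReal u).toReal ≤ (μ {ω | W ω ≤ (n:ℝ)}).toReal :=
      ENNReal.toReal_mono (hne_top _) hn.le
    rw [ENNReal.toReal_ofReal h0.le] at h2
    simpa only [hFdef] using h2
  -- value of Finv outside the good set
  have hFinv0 : ∀ u : ℝ, ¬(0 < u ∧ ∃ x : ℝ, u ≤ F x) → Finv u = 0 := by
    intro u hu
    rw [hFinv']
    by_cases h0 : 0 < u
    · have hno : ¬∃ x : ℝ, u ≤ F x := fun h => hu ⟨h0, h⟩
      have hempty : {x : ℝ | u ≤ F x} = ∅ := by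
        ext x
        simp only [Set.mem_setOf_eq, Set.mem_empty_iff_false, iff_false]
        exact fun h => hno ⟨x, h⟩
      rw [hempty, Real.sInf_empty]
    · push_neg at h0
      have huniv : {x : ℝ | u ≤ F x} = Set.univ := by
        ext x
        simp only [Set.mem_setOf_eq, Set.mem_univ, iff_true]
        exact h0.trans (hF0 x)
      rw [huniv]
      exact Real.sInf_of_not_bddBelow not_bddBelow_univ
  -- measurability of Finv
  have hGmeas : MeasurableSet {u : ℝ | 0 < u ∧ ∃ x : ℝ, u ≤ F x} := by
    have hGeq : {u : ℝ | 0 < u ∧ ∃ x : ℝ, u ≤ F x}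
        = Set.Ioi 0 ∩ ⋃ n : ℕ, Set.Iic (F (n : ℝ)) := by
      ext u
      simp only [Set.mem_setOf_eq, Set.mem_inter_iff, Set.mem_Ioi, Set.mem_iUnion, Set.mem_Iic]
      refine and_congr_right fun _ => ⟨fun ⟨x, hx⟩ => ?_, fun ⟨n, hn⟩ => ⟨(n:ℝ), hn⟩⟩
      obtain ⟨n, hn⟩ := exists_nat_ge x
      exact ⟨n, hx.trans (hFmono hn)⟩
    rw [hGeq]
    exact measurableSet_Ioi.inter (MeasurableSet.iUnion fun n => measurableSet_Iic)
  have hFinvMeas : Measurable Finv := by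
    apply measurable_of_Iic
    intro y
    have hpre : Finv ⁻¹' Set.Iic y =
        ({u : ℝ | 0 < u ∧ ∃ x : ℝ, u ≤ F x} ∩ Set.Iic (F y)) ∪
        ({u : ℝ | 0 < u ∧ ∃ x : ℝ, u ≤ F x}ᶜ ∩ (if 0 ≤ y then Set.univ else (∅ : Set ℝ))) := by
      ext u
      by_cases hG : 0 < u ∧ ∃ x : ℝ, u ≤ F x
      · simp only [Set.mem_preimage, Set.mem_Iic, Set.mem_union, Set.mem_inter_iff,
          Set.mem_setOf_eq, Set.mem_compl_iff, hG, true_and, not_true_eq_false, false_and,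
          or_false]
        exact hinvle u y hG.1 hG.2
      · have h0 := hFinv0 u hG
        simp only [Set.mem_preimage, Set.mem_Iic, h0, Set.mem_union, Set.mem_inter_iff,
          Set.mem_setOf_eq, hG, false_and, Set.mem_compl_iff, not_false_eq_true, true_and,
          false_or]
        split_ifs with hy
        · simp [hy]
        · simp only [Set.mem_empty_iff_false, iff_false, not_le]
          exact lt_of_not_ge hy
    rw [hpre]
    refine (hGmeas.inter measurableSet_Iic).union (hGmeas.compl.inter ?_)
    split_ifs
    · exact MeasurableSet.univ
    · exact MeasurableSet.empty
  -- volume computation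
  have hvol : ∀ y : ℝ, volume (Finv ⁻¹' Set.Iic y ∩ Set.Icc (0:ℝ) (1/2))
      + volume (Finv ⁻¹' Set.Iic y ∩ Set.Icc (1/2:ℝ) 1) = ENNReal.ofReal (F y) := by
    intro y
    set P := Finv ⁻¹' Set.Iic y with hP
    have hPmeas : MeasurableSet P := hFinvMeas measurableSet_Iic
    have hUnion : (P ∩ Set.Icc (0:ℝ) (1/2)) ∪ (P ∩ Set.Icc (1/2:ℝ) 1) = P ∩ Set.Icc (0:ℝ) 1 := by
      rw [← Set.inter_union_distrib_left, Set.Icc_union_Icc_eq_Icc (by norm_num) (by norm_num)]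
    have hInterNull : volume ((P ∩ Set.Icc (0:ℝ) (1/2)) ∩ (P ∩ Set.Icc (1/2:ℝ) 1)) = 0 := by
      refine measure_mono_null (fun u hu => ?_) (Real.volume_singleton (a := (1/2:ℝ)))
      obtain ⟨⟨-, h1⟩, ⟨-, h2⟩⟩ := hu
      have : u = 1/2 := le_antisymm h1.2 h2.1
      simp [this]
    have hsum := measure_union_add_inter (μ := volume) (t := P ∩ Set.Icc (1/2:ℝ) 1)
      (P ∩ Set.Icc (0:ℝ) (1/2)) (hPmeas.inter measurableSet_Icc)
    rw [hUnion, hInterNull, add_zero] at hsum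
    rw [← hsum]
    have hIoo : P ∩ Set.Ioo (0:ℝ) 1 = Set.Iic (F y) ∩ Set.Ioo (0:ℝ) 1 := by
      ext u
      simp only [hP, Set.mem_inter_iff, Set.mem_preimage, Set.mem_Iic, Set.mem_Ioo]
      constructor
      · rintro ⟨h1, h2⟩
        exact ⟨(hinvle u y h2.1 (hex u h2.2)).mp h1, h2⟩
      · rintro ⟨h1, h2⟩
        exact ⟨(hinvle u y h2.1 (hex u h2.2)).mpr h1, h2⟩
    have hIooVol : volume (Set.Iic (F y) ∩ Set.Ioo (0:ℝ) 1) = ENNReal.ofReal (F y) := by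
      have hsub1 : Set.Ioo (0:ℝ) (F y) ⊆ Set.Iic (F y) ∩ Set.Ioo (0:ℝ) 1 := by
        rintro u ⟨h1, h2⟩
        exact ⟨h2.le, h1, lt_of_lt_of_le h2 (hF1 y)⟩
      have hsub2 : Set.Iic (F y) ∩ Set.Ioo (0:ℝ) 1 ⊆ Set.Ioc (0:ℝ) (F y) := by
        rintro u ⟨h1, h2⟩
        exact ⟨h2.1, h1⟩
      refine le_antisymm ?_ ?_
      · calc volume (Set.Iic (F y) ∩ Set.Ioo (0:ℝ) 1) ≤ volume (Set.Ioc (0:ℝ) (F y)) :=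
              measure_mono hsub2
          _ = ENNReal.ofReal (F y) := by rw [Real.volume_Ioc, sub_zero]
      · calc ENNReal.ofReal (F y) = volume (Set.Ioo (0:ℝ) (F y)) := by
              rw [Real.volume_Ioo, sub_zero]
          _ ≤ volume (Set.Iic (F y) ∩ Set.Ioo (0:ℝ) 1) := measure_mono hsub1
    have h01 : volume ({0, 1} : Set ℝ) = 0 :=
      Set.Countable.measure_zero ((Set.finite_singleton (1:ℝ)).insert 0).countable _
    refine le_antisymm ?_ ?_
    · have hsubU : P ∩ Set.Icc (0:ℝ) 1 ⊆ (Set.Iic (F y) ∩ Set.Ioo (0:ℝ) 1) ∪ {0, 1} := by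
        rintro u ⟨hu1, hu2⟩
        rcases eq_or_lt_of_le hu2.1 with h | h
        · exact Or.inr (Or.inl h.symm)
        rcases eq_or_lt_of_le hu2.2 with h' | h'
        · exact Or.inr (Or.inr (by simp [h']))
        · refine Or.inl ?_
          rw [← hIoo]
          exact ⟨hu1, h, h'⟩
      calc volume (P ∩ Set.Icc (0:ℝ) 1)
          ≤ volume (Set.Iic (F y) ∩ Set.Ioo (0:ℝ) 1) + volume ({0, 1} : Set ℝ) :=
            le_trans (measure_mono hsubU) (measure_union_le _ _)
        _ = ENNReal.ofReal (F y) := by rw [hIooVol, h01, add_zero]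
    · rw [← hIooVol, ← hIoo]
      exact measure_mono (Set.inter_subset_inter_right _ Set.Ioo_subset_Icc_self)
  -- map formulas
  have hmapX : ∀ s : Set ℝ, MeasurableSet s →
      μ.map X s = 2 * volume (Finv ⁻¹' s ∩ Set.Icc (0:ℝ) (1/2)) := by
    intro s hs
    rw [hlawX, Measure.smul_apply, Measure.map_apply hFinvMeas hs,
      Measure.restrict_apply (hFinvMeas hs), smul_eq_mul]
  have hmapZ : ∀ s : Set ℝ, MeasurableSet s →
      μ.map Z s = 2 * volume (Finv ⁻¹' s ∩ Set.Icc (1/2:ℝ) 1) := by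
    intro s hs
    rw [hlawZ, Measure.smul_apply, Measure.map_apply hFinvMeas hs,
      Measure.restrict_apply (hFinvMeas hs), smul_eq_mul]
  -- η is a.s. {0,1}-valued
  have hE0 : MeasurableSet {ω | η ω = 0} := hη (measurableSet_singleton 0)
  have hE1 : MeasurableSet {ω | η ω = 1} := hη (measurableSet_singleton 1)
  have hdisj : Disjoint {ω | η ω = 0} {ω | η ω = 1} := by
    rw [Set.disjoint_left]
    intro ω h0 h1
    simp only [Set.mem_setOf_eq] at h0 h1
    rw [h0] at h1
    norm_num at h1
  have hcomp : μ ({ω | η ω = 0} ∪ {ω | η ω = 1})ᶜ = 0 := by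
    have hu := measure_union (μ := μ) hdisj hE1
    rw [measure_compl (hE0.union hE1) (measure_ne_top μ _), hu, hη0, hη1, measure_univ,
      ENNReal.add_halves, tsub_self]
  have hXη : IndepFun X η μ := by
    have := hindep.indepFun (i := 0) (j := 2) (by decide)
    simpa using this
  have hZη : IndepFun Z η μ := by
    have := hindep.indepFun (i := 1) (j := 2) (by decide)
    simpa using this
  have hVmeas : Measurable fun ω => X ω + η ω * (Z ω - X ω) := by
    exact hX.add (hη.mul (hZ.sub hX))
  -- splitting the law of the mixture
  have hsplit : ∀ s : Set ℝ, MeasurableSet s →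
      μ ((fun ω => X ω + η ω * (Z ω - X ω)) ⁻¹' s)
        = μ (X ⁻¹' s) * (1/2) + μ (Z ⁻¹' s) * (1/2) := by
    intro s hs
    set A := (fun ω => X ω + η ω * (Z ω - X ω)) ⁻¹' s with hA
    have hAmeas : MeasurableSet A := hVmeas hs
    have hA0 : A ∩ {ω | η ω = 0} = X ⁻¹' s ∩ {ω | η ω = 0} := by
      ext ω
      simp only [hA, Set.mem_inter_iff, Set.mem_setOf_eq, Set.mem_preimage]
      constructor
      · rintro ⟨h1, h2⟩
        refine ⟨?_, h2⟩
        have he : X ω + η ω * (Z ω - X ω) = X ω := by rw [h2]; ring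
        rwa [he] at h1
      · rintro ⟨h1, h2⟩
        refine ⟨?_, h2⟩
        have he : X ω + η ω * (Z ω - X ω) = X ω := by rw [h2]; ring
        rwa [he]
    have hA1 : A ∩ {ω | η ω = 1} = Z ⁻¹' s ∩ {ω | η ω = 1} := by
      ext ω
      simp only [hA, Set.mem_inter_iff, Set.mem_setOf_eq, Set.mem_preimage]
      constructor
      · rintro ⟨h1, h2⟩
        refine ⟨?_, h2⟩
        have he : X ω + η ω * (Z ω - X ω) = Z ω := by rw [h2]; ring
        rwa [he] at h1
      · rintro ⟨h1, h2⟩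
        refine ⟨?_, h2⟩
        have he : X ω + η ω * (Z ω - X ω) = Z ω := by rw [h2]; ring
        rwa [he]
    have hdecomp : μ A = μ (A ∩ {ω | η ω = 0}) + μ (A ∩ {ω | η ω = 1}) := by
      have h1 : μ A = μ (A ∩ ({ω | η ω = 0} ∪ {ω | η ω = 1})) := by
        refine le_antisymm ?_ (measure_mono Set.inter_subset_left)
        calc μ A = μ (A ∩ ({ω | η ω = 0} ∪ {ω | η ω = 1})
                ∪ A ∩ ({ω | η ω = 0} ∪ {ω | η ω = 1})ᶜ) := by
              rw [Set.inter_union_compl]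
          _ ≤ μ (A ∩ ({ω | η ω = 0} ∪ {ω | η ω = 1}))
                + μ (A ∩ ({ω | η ω = 0} ∪ {ω | η ω = 1})ᶜ) := measure_union_le _ _
          _ = μ (A ∩ ({ω | η ω = 0} ∪ {ω | η ω = 1})) := by
              rw [measure_mono_null Set.inter_subset_right hcomp, add_zero]
      rw [h1, Set.inter_union_distrib_left]
      exact measure_union (hdisj.mono Set.inter_subset_right Set.inter_subset_right)
        (hAmeas.inter hE1)
    have hpre0 : {ω | η ω = 0} = η ⁻¹' {0} := rfl
    have hpre1 : {ω | η ω = 1} = η ⁻¹' {1} := rfl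
    rw [hdecomp, hA0, hA1, hpre0, hpre1,
      hXη.measure_inter_preimage_eq_mul s {0} hs (measurableSet_singleton 0),
      hZη.measure_inter_preimage_eq_mul s {1} hs (measurableSet_singleton 1),
      ← hpre0, ← hpre1, hη0, hη1]
  -- Part 1
  have h2half : ∀ a : ℝ≥0∞, 2 * a * (1/2) = a := by
    intro a
    rw [mul_comm (2:ℝ≥0∞) a, mul_assoc,
      show (2:ℝ≥0∞) * (1/2) = 1 by
        rw [one_div, ENNReal.mul_inv_cancel two_ne_zero ENNReal.ofNat_ne_top],
      mul_one]
  have part1 : μ.map (fun ω => X ω + η ω * (Z ω - X ω)) = μ.map W := by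
    have : IsProbabilityMeasure (μ.map fun ω => X ω + η ω * (Z ω - X ω)) :=
      Measure.isProbabilityMeasure_map hVmeas.aemeasurable
    refine Measure.ext_of_Iic _ _ fun y => ?_
    rw [Measure.map_apply hVmeas measurableSet_Iic, Measure.map_apply hW measurableSet_Iic,
      hsplit _ measurableSet_Iic, ← Measure.map_apply hX measurableSet_Iic,
      ← Measure.map_apply hZ measurableSet_Iic, hmapX _ measurableSet_Iic,
      hmapZ _ measurableSet_Iic, h2half, h2half, hvol y]
    exact hFofReal y
  -- Part 2
  have hmhalf_ne : {x : ℝ | (1/2:ℝ) ≤ F x}.Nonempty := hex (1/2) (by norm_num)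
  have h2volhalf : (2:ℝ≥0∞) * ENNReal.ofReal (1/2) = 1 := by
    rw [show (2:ℝ≥0∞) = ENNReal.ofReal 2 by simp,
      ← ENNReal.ofReal_mul (by norm_num : (0:ℝ) ≤ 2)]
    norm_num
  have hXle : μ {ω | X ω ≤ Finv (1/2 : ℝ)} = 1 := by
    have hsub : Set.Ioc (0:ℝ) (1/2) ⊆ Finv ⁻¹' Set.Iic (Finv (1/2:ℝ)) ∩ Set.Icc (0:ℝ) (1/2) := by
      intro u hu
      refine ⟨?_, hu.1.le, hu.2⟩
      simp only [Set.mem_preimage, Set.mem_Iic]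
      rw [hFinv' u, hFinv' (1/2)]
      exact csInf_le_csInf (hbdd u hu.1) hmhalf_ne fun x hx => le_trans hu.2 hx
    refine le_antisymm prob_le_one ?_
    have heq : {ω | X ω ≤ Finv (1/2:ℝ)} = X ⁻¹' Set.Iic (Finv (1/2:ℝ)) := rfl
    rw [heq, ← Measure.map_apply hX measurableSet_Iic, hmapX _ measurableSet_Iic]
    calc (1:ℝ≥0∞) = 2 * volume (Set.Ioc (0:ℝ) (1/2)) := by
          rw [Real.volume_Ioc, sub_zero, h2volhalf]
      _ ≤ 2 * volume (Finv ⁻¹' Set.Iic (Finv (1/2:ℝ)) ∩ Set.Icc (0:ℝ) (1/2)) :=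
          mul_le_mul_right (measure_mono hsub) 2
  have hZge : μ {ω | Finv (1/2 : ℝ) ≤ Z ω} = 1 := by
    have hsub : Set.Ico (1/2:ℝ) 1 ⊆ Finv ⁻¹' Set.Ici (Finv (1/2:ℝ)) ∩ Set.Icc (1/2:ℝ) 1 := by
      intro u hu
      refine ⟨?_, hu.1, hu.2.le⟩
      simp only [Set.mem_preimage, Set.mem_Ici]
      rw [hFinv' u, hFinv' (1/2)]
      exact csInf_le_csInf (hbdd (1/2) (by norm_num)) (hex u hu.2)
        fun x hx => le_trans hu.1 hx
    refine le_antisymm prob_le_one ?_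
    have heq : {ω | Finv (1/2:ℝ) ≤ Z ω} = Z ⁻¹' Set.Ici (Finv (1/2:ℝ)) := rfl
    rw [heq, ← Measure.map_apply hZ measurableSet_Ici, hmapZ _ measurableSet_Ici]
    calc (1:ℝ≥0∞) = 2 * volume (Set.Ico (1/2:ℝ) 1) := by
          rw [Real.volume_Ico, show (1:ℝ) - 1/2 = 1/2 by norm_num, h2volhalf]
      _ ≤ 2 * volume (Finv ⁻¹' Set.Ici (Finv (1/2:ℝ)) ∩ Set.Icc (1/2:ℝ) 1) :=
          mul_le_mul_right (measure_mono hsub) 2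
  have hAm : MeasurableSet {ω | X ω ≤ Finv (1/2:ℝ)} := hX measurableSet_Iic
  have hBm : MeasurableSet {ω | Finv (1/2:ℝ) ≤ Z ω} := hZ measurableSet_Ici
  have hinter : μ ({ω | X ω ≤ Finv (1/2:ℝ)} ∩ {ω | Finv (1/2:ℝ) ≤ Z ω}) = 1 := by
    have hcompl : μ ({ω | X ω ≤ Finv (1/2:ℝ)} ∩ {ω | Finv (1/2:ℝ) ≤ Z ω})ᶜ = 0 := by
      rw [Set.compl_inter]
      refine le_antisymm (le_trans (measure_union_le _ _) ?_) zero_le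
      rw [measure_compl hAm (measure_ne_top μ _), measure_compl hBm (measure_ne_top μ _),
        hXle, hZge, measure_univ, tsub_self, add_zero]
    have hc := measure_compl (hAm.inter hBm) (measure_ne_top μ _)
    rw [hcompl, measure_univ] at hc
    have h1le : (1:ℝ≥0∞) ≤ μ ({ω | X ω ≤ Finv (1/2:ℝ)} ∩ {ω | Finv (1/2:ℝ) ≤ Z ω}) := by
      rwa [eq_comm, tsub_eq_zero_iff_le] at hc
    exact le_antisymm prob_le_one h1le
  refine ⟨part1, ?_⟩
  refine le_antisymm prob_le_one ?_
  calc (1:ℝ≥0∞) = μ ({ω | X ω ≤ Finv (1/2:ℝ)} ∩ {ω | Finv (1/2:ℝ) ≤ Z ω}) := hinter.symm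
    _ ≤ μ {ω | X ω ≤ Z ω} := measure_mono fun ω hω => show X ω ≤ Z ω from le_trans hω.1 hω.2

end FPPPaper
end
end

section
/- Let X be a real-valued random variable on a probability space with X ≤ M + L/2 almost surely, where M ∈ ℝ and L > 0, let 𝒢 be a sub-σ-algebra, and let c ∈ (0, 1/2). If P(E[X | 𝒢] ≥ M + cL) ≥ c, then P(X ≥ M + (c/2)L) ≥ c²/(1 − c). -/
open MeasureTheory ProbabilityTheory Filter Set
open scoped ENNReal Topology

noncomputable section

namespace FPPPaper

/-- **Untruncation** (Step 3, proof of Proposition 2.10). If `X ≤ M + L/2` a.s. and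
`ℙ(E[X|𝒢] ≥ M + cL) ≥ c` with `c ∈ (0, 1/2)`, then
`ℙ(X ≥ M + (c/2)L) ≥ c²/(1-c)`. -/
theorem statement13 {Ω : Type} [m0 : MeasurableSpace Ω] (μ : Measure Ω)
    [IsProbabilityMeasure μ]
    (X : Ω → ℝ) (hXint : Integrable X μ)
    (M L : ℝ) (hL : 0 < L)
    (hbd : ∀ᵐ ω ∂μ, X ω ≤ M + L / 2)
    (G : MeasurableSpace Ω) (hG : G ≤ m0)
    (c : ℝ) (hc : c ∈ Set.Ioo (0 : ℝ) (1 / 2))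
    (h : ENNReal.ofReal c ≤ μ {ω | M + c * L ≤ (μ[X|G]) ω}) :
    ENNReal.ofReal (c ^ 2 / (1 - c)) ≤ μ {ω | M + (c / 2) * L ≤ X ω} := by
  letI : MeasurableSpace Ω := m0
  obtain ⟨hc0, hc2⟩ := hc
  set A : Set Ω := {ω | M + c * L ≤ (μ[X|G]) ω} with hAdef
  have hA : MeasurableSet[G] A :=
    measurableSet_le measurable_const stronglyMeasurable_condExp.measurable
  have hAm : MeasurableSet[m0] A := hG _ hA
  set X' := hXint.1.mk X with hX'def
  have hX'meas : StronglyMeasurable[m0] X' := hXint.1.stronglyMeasurable_mk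
  have hX'eq : X =ᵐ[μ] X' := hXint.1.ae_eq_mk
  set B : Set Ω := {ω | M + (c / 2) * L ≤ X' ω} with hBdef
  have hB : MeasurableSet[m0] B := measurableSet_le measurable_const hX'meas.measurable
  have hsetEq : μ {ω | M + (c / 2) * L ≤ X ω} = μ B := by
    apply measure_congr
    rw [Filter.eventuallyEq_set]
    exact hX'eq.mono fun ω hω => by simp [hBdef, Set.mem_setOf_eq, hω]
  rw [hsetEq]
  -- integral inequalities
  have h1 : (M + c * L) * (μ A).toReal ≤ ∫ x in A, (μ[X|G]) x ∂μ :=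
    setIntegral_ge_of_const_le_real hAm (measure_ne_top μ A) (fun x hx => hx)
      integrable_condExp.integrableOn
  have h2 : ∫ x in A, (μ[X|G]) x ∂μ = ∫ x in A, X x ∂μ := setIntegral_condExp hG hXint hA
  have hdisj : Disjoint (A ∩ B) (A \ B) :=
    Set.disjoint_sdiff_right.mono_left Set.inter_subset_right
  have h3 : ∫ x in A, X x ∂μ = (∫ x in A ∩ B, X x ∂μ) + ∫ x in A \ B, X x ∂μ := by
    rw [← setIntegral_union hdisj (hAm.diff hB) hXint.integrableOn hXint.integrableOn,
      Set.inter_union_diff]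
  have h4 : ∫ x in A ∩ B, X x ∂μ ≤ (M + L / 2) * (μ (A ∩ B)).toReal := by
    have h' : ∫ x in A ∩ B, X x ∂μ ≤ ∫ _x in A ∩ B, (M + L / 2) ∂μ :=
      setIntegral_mono_ae_restrict hXint.integrableOn
        integrableOn_const (ae_restrict_of_ae hbd)
    simpa [setIntegral_const, mul_comm, Measure.real] using h'
  have hdb : ∀ᵐ ω ∂(μ.restrict (A \ B)), X ω ≤ M + (c / 2) * L := by
    filter_upwards [ae_restrict_mem (hAm.diff hB), ae_restrict_of_ae hX'eq] with ω hω heq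
    have : X' ω < M + (c / 2) * L := not_le.mp hω.2
    linarith [heq ▸ this]
  have h5 : ∫ x in A \ B, X x ∂μ ≤ (M + (c / 2) * L) * (μ (A \ B)).toReal := by
    have h' : ∫ x in A \ B, X x ∂μ ≤ ∫ _x in A \ B, (M + (c / 2) * L) ∂μ :=
      setIntegral_mono_ae_restrict hXint.integrableOn
        integrableOn_const hdb
    simpa [setIntegral_const, mul_comm, Measure.real] using h'
  set a := (μ A).toReal with hadef
  set b := (μ (A ∩ B)).toReal with hbdef
  set d := (μ (A \ B)).toReal with hddef
  have hadd : a = b + d := by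
    rw [hadef, hbdef, hddef, ← ENNReal.toReal_add (measure_ne_top _ _) (measure_ne_top _ _),
      measure_inter_add_diff A hB]
  have hb0 : 0 ≤ b := ENNReal.toReal_nonneg
  have hd0 : 0 ≤ d := ENNReal.toReal_nonneg
  have ha : c ≤ a := by
    rw [hadef, ← ENNReal.ofReal_le_iff_le_toReal (measure_ne_top μ A)]
    exact h
  have key : (M + c * L) * a ≤ (M + L / 2) * b + (M + (c / 2) * L) * d := by
    calc (M + c * L) * a ≤ ∫ x in A, (μ[X|G]) x ∂μ := h1
      _ = (∫ x in A ∩ B, X x ∂μ) + ∫ x in A \ B, X x ∂μ := h2.trans h3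
      _ ≤ (M + L / 2) * b + (M + (c / 2) * L) * d := add_le_add h4 h5
  have key' : c * (b + d) ≤ b / 2 + (c / 2) * d := by
    have h' : L * (c * (b + d)) ≤ L * (b / 2 + (c / 2) * d) := by
      rw [hadd] at key; nlinarith [key]
    exact (mul_le_mul_iff_of_pos_left hL).mp h'
  have hreal : c ^ 2 / (1 - c) ≤ b := by
    rw [div_le_iff₀ (by linarith : (0:ℝ) < 1 - c)]
    nlinarith [mul_le_mul_of_nonneg_left ha hc0.le, key', hd0, hb0, hadd]
  calc ENNReal.ofReal (c ^ 2 / (1 - c)) ≤ μ (A ∩ B) :=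
        (ENNReal.ofReal_le_iff_le_toReal (measure_ne_top _ _)).mpr hreal
    _ ≤ μ B := measure_mono Set.inter_subset_right

end FPPPaper
end
end

section
/- Under Assumption 2.1 and with A_n chosen so that M_n = (A_n + B_n)/2 is a median of E[T_n | N⃗], one has P(T(0,x_n) ∈ I_n') → 1 as n → ∞. -/
open MeasureTheory ProbabilityTheory Filter Set
open scoped ENNReal Topology

noncomputable section

namespace FPPPaper

/-! ### Auxiliary lemmas -/

instance instCountableLPath (d : ℕ) (x y : V d) : Countable (LPath d x y) := by
  have hinj : Function.Injective
      (fun p : LPath d x y => (⟨p.n, p.f⟩ : Σ n : ℕ, Fin (n + 1) → V d)) := by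
    rintro ⟨n1, f1, h1, h2, h3⟩ ⟨n2, f2, g1, g2, g3⟩ h
    obtain ⟨rfl, h'⟩ := Sigma.mk.inj_iff.mp h
    obtain rfl := eq_of_heq h'
    rfl
  exact hinj.countable

lemma measurable_pathTime {Ω : Type} [MeasurableSpace Ω] (t' : Edge 2 → Ω → ℝ)
    (ht' : ∀ e, Measurable (t' e)) {u v : V 2} (p : LPath 2 u v) :
    Measurable fun ω => pathTime (fun e => t' e ω) p := by
  unfold pathTime
  exact Finset.measurable_sum _ fun i _ => ht' _

lemma measurable_T {Ω : Type} [MeasurableSpace Ω] (t' : Edge 2 → Ω → ℝ)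
    (ht' : ∀ e, Measurable (t' e)) (hpos : ∀ e ω, 0 ≤ t' e ω) (v : V 2) :
    Measurable fun ω => T (fun e => t' e ω) 0 v := by
  have hrep : (fun ω => T (fun e => t' e ω) 0 v) =
      fun ω => (⨅ p : LPath 2 0 v,
        ENNReal.ofReal (pathTime (fun e => t' e ω) p)).toReal := by
    funext ω
    rw [ENNReal.toReal_iInf (fun p => ENNReal.ofReal_ne_top)]
    unfold T
    exact (iInf_congr fun p => ENNReal.toReal_ofReal
      (Finset.sum_nonneg fun i _ => hpos _ ω)).symm
  rw [hrep]
  exact (Measurable.iInf fun p =>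
    (measurable_pathTime t' ht' p).ennreal_ofReal).ennreal_toReal

lemma measurable_hiNumIn {Ω : Type} [MeasurableSpace Ω] (t : Edge 2 → Ω → ℝ)
    (ht : ∀ e, Measurable (t e)) (d0 : ℝ) (A : Set (Edge 2)) :
    Measurable (hiNumIn t d0 A) := by
  set S : Ω → Set (Edge 2) := fun ω => {e : Edge 2 | e ∈ A ∧ d0 < t e ω} with hS
  have hE : ∀ e : Edge 2, MeasurableSet {ω | e ∈ A ∧ d0 < t e ω} := by
    intro e
    by_cases hA : e ∈ A
    · simp only [hA, true_and]
      exact measurableSet_lt measurable_const (ht e)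
    · simp only [hA, false_and, Set.setOf_false]
      exact MeasurableSet.empty
  have hFeq : ∀ F : Finset (Edge 2), MeasurableSet {ω | S ω = ↑F} := by
    intro F
    have : {ω | S ω = ↑F} =
        ⋂ e : Edge 2, {ω | (e ∈ A ∧ d0 < t e ω) ↔ e ∈ F} := by
      ext ω
      simp only [Set.mem_setOf_eq, Set.mem_iInter, Set.ext_iff, hS, Finset.mem_coe]
    rw [this]
    refine MeasurableSet.iInter fun e => ?_
    by_cases hF : e ∈ F
    · have : {ω | (e ∈ A ∧ d0 < t e ω) ↔ e ∈ F} = {ω | e ∈ A ∧ d0 < t e ω} := by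
        ext ω; simp [hF]
      rw [this]; exact hE e
    · have : {ω | (e ∈ A ∧ d0 < t e ω) ↔ e ∈ F} = {ω | e ∈ A ∧ d0 < t e ω}ᶜ := by
        ext ω; simp [hF]
      rw [this]; exact (hE e).compl
  have hInf : MeasurableSet {ω | (S ω).Infinite} := by
    have : {ω | (S ω).Infinite} = ⋂ m : ℕ, ⋃ F : Finset (Edge 2), ⋃ _ : m ≤ F.card,
        {ω | ∀ e ∈ F, e ∈ A ∧ d0 < t e ω} := by
      ext ω
      simp only [Set.mem_setOf_eq, Set.mem_iInter, Set.mem_iUnion]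
      constructor
      · intro h m
        obtain ⟨F, hsub, hcard⟩ := h.exists_subset_card_eq m
        exact ⟨F, hcard.ge, fun e he => hsub he⟩
      · intro h
        by_contra hfin
        rw [Set.not_infinite] at hfin
        obtain ⟨F, hcard, hsub⟩ := h (hfin.toFinset.card + 1)
        have hFsub : F ⊆ hfin.toFinset := by
          intro e he
          rw [Set.Finite.mem_toFinset]
          exact hsub e he
        have := Finset.card_le_card hFsub
        omega
    rw [this]
    refine MeasurableSet.iInter fun m => MeasurableSet.iUnion fun F =>
      MeasurableSet.iUnion fun _ => ?_
    have : {ω | ∀ e ∈ F, e ∈ A ∧ d0 < t e ω} =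
        ⋂ e ∈ F, {ω | e ∈ A ∧ d0 < t e ω} := by
      ext ω; simp
    rw [this]
    exact MeasurableSet.biInter F.countable_toSet fun e _ => hE e
  apply measurable_to_countable'
  intro n
  have hpre : ∀ k : ℕ, hiNumIn t d0 A ⁻¹' {k} = {ω | (S ω).ncard = k} := by
    intro k; rfl
  match n with
  | 0 =>
    have : hiNumIn t d0 A ⁻¹' {0} =
        {ω | (S ω).Infinite} ∪ {ω | S ω = ↑(∅ : Finset (Edge 2))} := by
      rw [hpre]
      ext ω
      simp only [Set.mem_setOf_eq, Set.mem_union, Finset.coe_empty]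
      constructor
      · intro h
        by_cases hfin : (S ω).Infinite
        · exact Or.inl hfin
        · rw [Set.not_infinite] at hfin
          exact Or.inr ((Set.ncard_eq_zero hfin).mp h)
      · rintro (h | h)
        · exact h.ncard
        · rw [h]; exact Set.ncard_empty _
    rw [this]
    exact hInf.union (hFeq ∅)
  | (m + 1) =>
    have : hiNumIn t d0 A ⁻¹' {m + 1} =
        ⋃ F : Finset (Edge 2), ⋃ _ : F.card = m + 1, {ω | S ω = ↑F} := by
      rw [hpre]
      ext ω
      simp only [Set.mem_setOf_eq, Set.mem_iUnion]
      constructor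
      · intro h
        have hfin : (S ω).Finite := by
          by_contra hinf
          have h0 : (S ω).ncard = 0 := Set.Infinite.ncard hinf
          omega
        refine ⟨hfin.toFinset, ?_, (hfin.coe_toFinset).symm⟩
        exact (Set.ncard_eq_toFinset_card (S ω) hfin).symm.trans h
      · rintro ⟨F, hcard, hF⟩
        rw [hF, Set.ncard_coe_finset]
        exact hcard
    rw [this]
    exact MeasurableSet.iUnion fun F => MeasurableSet.iUnion fun _ => hFeq F

lemma sigmaFam_le {Ω : Type} [m0 : MeasurableSpace Ω] (t : Edge 2 → Ω → ℝ)
    (ht : ∀ e, Measurable (t e)) (d0 : ℝ) (As : ℕ → Set (Edge 2)) :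
    sigmaFam t d0 As ≤ m0 := by
  apply Measurable.comap_le
  exact measurable_pi_lambda _ fun j => measurable_hiNumIn t ht d0 (As j)

/-- The key deterministic-interval step in the proof of Lemma 2.3. -/
lemma key_interval {Ω : Type} [m0 : MeasurableSpace Ω] (μ : Measure Ω)
    [IsProbabilityMeasure μ]
    (t : Edge 2 → Ω → ℝ) (d0 K : ℝ) (hG : sigmaHi t d0 K ≤ m0)
    (T' : Ω → ℝ) (hT' : Measurable T')
    (aa ℓ A s M : ℝ) (hs : 0 < s) (hal : aa ≤ ℓ) (hlen : ℓ - aa ≤ s / 8)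
    (hM : M = A + s / 2)
    (hgood : ENNReal.ofReal (31 / 32) < μ {ω | T' ω ∈ Set.Icc aa ℓ})
    (f : Ω → ℝ) (hf : f =ᵐ[μ] fun ω => clamp A (A + s) (T' ω))
    (hmed : IsMedian μ (μ[f|sigmaHi t d0 K]) M) :
    Set.Icc aa ℓ ⊆ Set.Icc (M - s / 4) (M + s / 4) := by
  set Y : Ω → ℝ := μ[f|sigmaHi t d0 K] with hY_def
  by_contra hcon
  have hcase : aa < M - s / 4 ∨ M + s / 4 < ℓ := by
    by_contra h
    push_neg at h
    exact hcon fun r hr => ⟨le_trans h.1 hr.1, le_trans hr.2 h.2⟩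
  set Good : Set Ω := {ω | T' ω ∈ Set.Icc aa ℓ} with hGood_def
  set Bad : Set Ω := Goodᶜ with hBad_def
  have hGm : MeasurableSet[m0] Good := hT' measurableSet_Icc
  have hBm : MeasurableSet[m0] Bad := hGm.compl
  have hsum : μ Good + μ Bad = 1 := by
    rw [hBad_def, measure_add_measure_compl hGm, measure_univ]
  have htR : (μ Good).toReal + (μ Bad).toReal = 1 := by
    rw [← ENNReal.toReal_add (measure_ne_top μ _) (measure_ne_top μ _), hsum,
      ENNReal.toReal_one]
  have hGR : (31 : ℝ) / 32 < (μ Good).toReal := by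
    have h := (ENNReal.toReal_lt_toReal ENNReal.ofReal_ne_top (measure_ne_top μ Good)).mpr hgood
    rwa [ENNReal.toReal_ofReal (by norm_num)] at h
  have hBR : (μ Bad).toReal ≤ 1 / 32 := by linarith
  set ind : Ω → ℝ := Bad.indicator (fun _ => (1 : ℝ)) with hind_def
  have hindI : Integrable ind μ := (integrable_const (1 : ℝ)).indicator hBm
  set Z : Ω → ℝ := μ[ind|sigmaHi t d0 K] with hZ_def
  have hZnn : 0 ≤ᵐ[μ] Z :=
    condExp_nonneg (Filter.Eventually.of_forall fun ω =>
      Set.indicator_nonneg (fun _ _ => zero_le_one) ω)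
  have hZint : ∫ ω, Z ω ∂μ = (μ Bad).toReal := by
    rw [hZ_def, integral_condExp hG, hind_def, integral_indicator_const (1 : ℝ) hBm,
      smul_eq_mul, mul_one]
    rfl
  have hmark := mul_meas_ge_le_integral_of_nonneg hZnn integrable_condExp (1 / 8)
  rw [hZint] at hmark
  have hZR : (μ {ω | 1 / 8 ≤ Z ω}).toReal ≤ 1 / 4 := by
    have hre : μ.real {ω | 1 / 8 ≤ Z ω} = (μ {ω | 1 / 8 ≤ Z ω}).toReal := rfl
    linarith
  set g0 : Ω → ℝ := fun ω => clamp A (A + s) (T' ω) with hg0_def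
  have hg0lb : ∀ ω, A ≤ g0 ω := fun ω => le_max_left _ _
  have hg0ub : ∀ ω, g0 ω ≤ A + s := fun ω => max_le (by linarith) (min_le_left _ _)
  have hg0m : Measurable[m0] g0 := measurable_const.max (measurable_const.min hT')
  have hg0i : Integrable g0 μ := by
    refine Integrable.mono' (integrable_const (|A| + s)) hg0m.aestronglyMeasurable
      (Filter.Eventually.of_forall fun ω => ?_)
    rw [Real.norm_eq_abs, abs_le]
    constructor
    · have := neg_abs_le A; linarith [hg0lb ω]
    · have := le_abs_self A; linarith [hg0ub ω]
  have hY : Y =ᵐ[μ] μ[g0|sigmaHi t d0 K] := condExp_congr_ae hf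
  have hmono_Z : ∀ (c r : ℝ), μ[(fun _ : Ω => c) + r • ind|sigmaHi t d0 K] =ᵐ[μ]
      fun ω => c + r * Z ω := by
    intro c r
    have e0 : μ[(fun _ : Ω => c) + r • ind|sigmaHi t d0 K] =ᵐ[μ]
        μ[(fun _ : Ω => c)|sigmaHi t d0 K] + μ[r • ind|sigmaHi t d0 K] :=
      condExp_add (integrable_const c) (hindI.smul r) _
    have e1 : μ[(fun _ : Ω => c)|sigmaHi t d0 K] = fun _ => c := condExp_const hG c
    have e2 : μ[r • ind|sigmaHi t d0 K] =ᵐ[μ] r • Z := condExp_smul r ind _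
    refine e0.trans ?_
    rw [e1]
    filter_upwards [e2] with ω h2
    simp only [Pi.add_apply, Pi.smul_apply, smul_eq_mul] at h2 ⊢
    rw [h2]
  -- Markov bound on the concentration event for Z, contradiction with the median.
  have final : ∀ S : Set Ω, (1 : ℝ≥0∞) / 2 ≤ μ S → S ≤ᵐ[μ] {ω | 1 / 8 ≤ Z ω} → False := by
    intro S hhalf hsub
    have h1 : μ S ≤ μ {ω | 1 / 8 ≤ Z ω} := measure_mono_ae hsub
    have h2 : (1 : ℝ≥0∞) / 2 ≤ μ {ω | 1 / 8 ≤ Z ω} := le_trans hhalf h1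
    have h3 : ((1 : ℝ≥0∞) / 2).toReal ≤ (μ {ω | 1 / 8 ≤ Z ω}).toReal :=
      ENNReal.toReal_mono (measure_ne_top μ _) h2
    have h4 : ((1 : ℝ≥0∞) / 2).toReal = 1 / 2 := by
      rw [ENNReal.toReal_div, ENNReal.toReal_one]
      norm_num
    rw [h4] at h3
    linarith
  rcases hcase with h1 | h1
  · -- interval lies too low
    have hℓ : ℓ ≤ M - s / 8 := by linarith
    set h1f : Ω → ℝ := (fun _ : Ω => M - s / 8) + s • ind with hh1_def
    have hpt : g0 ≤ᵐ[μ] h1f := by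
      refine Filter.Eventually.of_forall fun ω => ?_
      simp only [hh1_def, Pi.add_apply, Pi.smul_apply, smul_eq_mul, hind_def]
      by_cases hω : ω ∈ Bad
      · rw [Set.indicator_of_mem hω]
        have := hg0ub ω
        linarith
      · rw [Set.indicator_of_notMem hω]
        have hωG : T' ω ∈ Set.Icc aa ℓ := not_not.mp hω
        have : g0 ω ≤ M - s / 8 := by
          refine max_le (by linarith) ?_
          exact le_trans (min_le_right _ _) (le_trans hωG.2 hℓ)
        linarith
    have hh1i : Integrable h1f μ := (integrable_const _).add (hindI.smul s)
    have hc1 : μ[g0|sigmaHi t d0 K] ≤ᵐ[μ] μ[h1f|sigmaHi t d0 K] := condExp_mono hg0i hh1i hpt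
    have hc2 : μ[h1f|sigmaHi t d0 K] =ᵐ[μ] fun ω => (M - s / 8) + s * Z ω := hmono_Z (M - s / 8) s
    refine final {ω | M ≤ Y ω} hmed.2 ?_
    filter_upwards [hY, hc1, hc2] with ω e1 e2 e3
    intro hm
    have hb : Y ω ≤ M - s / 8 + s * Z ω := by
      rw [e1]; exact le_trans e2 (le_of_eq e3)
    have hsZ : s * (1 / 8) ≤ s * Z ω := by
      have : M ≤ M - s / 8 + s * Z ω := le_trans hm hb
      linarith
    exact (mul_le_mul_iff_right₀ hs).mp hsZ
  · -- interval lies too high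
    have ha' : M + s / 8 ≤ aa := by linarith
    set h2f : Ω → ℝ := (fun _ : Ω => M + s / 8) + (-s) • ind with hh2_def
    have hpt : h2f ≤ᵐ[μ] g0 := by
      refine Filter.Eventually.of_forall fun ω => ?_
      simp only [hh2_def, Pi.add_apply, Pi.smul_apply, smul_eq_mul, hind_def]
      by_cases hω : ω ∈ Bad
      · rw [Set.indicator_of_mem hω]
        have := hg0lb ω
        linarith
      · rw [Set.indicator_of_notMem hω]
        have hωG : T' ω ∈ Set.Icc aa ℓ := not_not.mp hω
        have : M + s / 8 ≤ g0 ω := by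
          refine le_max_of_le_right (le_min (by linarith) (le_trans ?_ hωG.1))
          linarith
        linarith
    have hh2i : Integrable h2f μ := (integrable_const _).add (hindI.smul (-s))
    have hc1 : μ[h2f|sigmaHi t d0 K] ≤ᵐ[μ] μ[g0|sigmaHi t d0 K] := condExp_mono hh2i hg0i hpt
    have hc2 : μ[h2f|sigmaHi t d0 K] =ᵐ[μ] fun ω => (M + s / 8) + (-s) * Z ω := hmono_Z (M + s / 8) (-s)
    refine final {ω | Y ω ≤ M} hmed.1 ?_
    filter_upwards [hY, hc1, hc2] with ω e1 e2 e3
    intro hm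
    have hb : M + s / 8 + (-s) * Z ω ≤ Y ω := by
      rw [e1]; exact le_trans (le_of_eq e3.symm) e2
    have hsZ : s * (1 / 8) ≤ s * Z ω := by
      have : M + s / 8 + (-s) * Z ω ≤ M := le_trans hb hm
      linarith
    exact (mul_le_mul_iff_right₀ hs).mp hsZ

/-- **Lemma 2.3.** Under Assumption 2.1 (the passage times `T(0,x_n)` concentrate in
intervals of length `w_n √(log ‖x_n‖)` with `w_n ↓ 0`), and with `A_n` chosen so that
`M_n = (A_n + B_n)/2` is a median of `E[T_n | N⃗]`, one has
`ℙ(T(0,x_n) ∈ I_n') → 1`. -/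
theorem statement14 {Ω : Type} [m0 : MeasurableSpace Ω] (μ : Measure Ω)
    [IsProbabilityMeasure μ]
    (t : Edge 2 → Ω → ℝ) (ht : ∀ e, Measurable (t e))
    (hnn : ∀ e, ∀ᵐ ω ∂μ, 0 ≤ t e ω)
    (hindep : iIndepFun t μ)
    (F : ℝ → ℝ) (hF : IsCDF μ t F) (h11 : Cond11 F)
    (d0 : ℝ) (hd0 : suppInf F < d0) (hFd0 : F d0 ∈ Set.Ioo (0 : ℝ) 1)
    (K : ℝ) (hK : 0 < K)
    -- Assumption 2.1:
    (w : ℕ → ℝ) (hw_anti : Antitone w) (hw0 : Tendsto w atTop (𝓝 0))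
    (a : ℕ → ℝ)
    (x : ℕ → V 2) (hx0 : ∀ n, x n ≠ 0)
    (hxinf : Tendsto (fun n => ‖emb (x n)‖) atTop atTop)
    (hass : Tendsto (fun n => μ {ω | T (fun e => t e ω) 0 (x n) ∈
        Set.Icc (a n) (a n + w n * slog (x n))}) atTop (𝓝 1))
    -- truncation and the choice of `A_n`:
    (A : ℕ → ℝ)
    (hmed : ∀ n, @IsMedian Ω m0 μ
      (μ[fun ω => clamp (A n) (A n + slog (x n)) (T (fun e => t e ω) 0 (x n)) |
          sigmaHi t d0 K])
      (MnOf (A n) (slog (x n)))) :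
    Tendsto (fun n => μ {ω | T (fun e => t e ω) 0 (x n) ∈
        In' (MnOf (A n) (slog (x n))) (slog (x n))}) atTop (𝓝 1) := by
  -- nonnegative modification of the weights
  set tm : Edge 2 → Ω → ℝ := fun e ω => max (t e ω) 0 with htm_def
  have htmm : ∀ e, Measurable (tm e) := fun e => (ht e).max measurable_const
  have htmp : ∀ e ω, 0 ≤ tm e ω := fun e ω => le_max_right _ _
  have hTm : ∀ v : V 2, Measurable fun ω => T (fun e => tm e ω) 0 v :=
    measurable_T tm htmm htmp
  have hae0 : ∀ᵐ ω ∂μ, ∀ e : Edge 2, 0 ≤ t e ω := (ae_all_iff).2 hnn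
  have hTae : ∀ v : V 2,
      (fun ω => T (fun e => t e ω) 0 v) =ᵐ[μ] fun ω => T (fun e => tm e ω) 0 v := by
    intro v
    filter_upwards [hae0] with ω hω
    have : (fun e => tm e ω) = fun e => t e ω := funext fun e => max_eq_left (hω e)
    rw [this]
  have hG : sigmaHi t d0 K ≤ m0 := sigmaFam_le t ht d0 (annulus 2 K)
  -- concentration for the modified passage time
  have hcong : ∀ n, μ {ω | T (fun e => tm e ω) 0 (x n) ∈
      Set.Icc (a n) (a n + w n * slog (x n))} = μ {ω | T (fun e => t e ω) 0 (x n) ∈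
      Set.Icc (a n) (a n + w n * slog (x n))} := by
    intro n
    refine measure_congr ?_
    rw [eventuallyEq_set]
    filter_upwards [hTae (x n)] with ω hω
    simp only [Set.mem_setOf_eq, hω]
  have hassm : Tendsto (fun n => μ {ω | T (fun e => tm e ω) 0 (x n) ∈
      Set.Icc (a n) (a n + w n * slog (x n))}) atTop (𝓝 1) := by
    simp only [hcong]; exact hass
  have h31 : ENNReal.ofReal (31 / 32) < 1 := ENNReal.ofReal_lt_one.2 (by norm_num)
  have hassev : ∀ᶠ n in atTop, ENNReal.ofReal (31 / 32) <
      μ {ω | T (fun e => tm e ω) 0 (x n) ∈ Set.Icc (a n) (a n + w n * slog (x n))} :=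
    hassm.eventually (eventually_gt_nhds h31)
  have hsig : ∀ᶠ n in atTop, 0 < slog (x n) := by
    filter_upwards [hxinf.eventually_ge_atTop 2] with n hn
    exact Real.sqrt_pos.2 (Real.log_pos (by linarith))
  have hwev : ∀ᶠ n in atTop, w n ≤ 1 / 8 :=
    hw0.eventually (eventually_le_nhds (by norm_num : (0 : ℝ) < 1 / 8))
  have hwnn : ∀ n, 0 ≤ w n := by
    intro n
    refine le_of_tendsto hw0 ?_
    filter_upwards [eventually_ge_atTop n] with m hm
    exact hw_anti hm
  -- eventual inclusion of the concentration interval in `I_n'`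
  have hsubset : ∀ᶠ n in atTop, Set.Icc (a n) (a n + w n * slog (x n)) ⊆
      In' (MnOf (A n) (slog (x n))) (slog (x n)) := by
    filter_upwards [hsig, hwev, hassev] with n h1 h2 h3
    have hM : MnOf (A n) (slog (x n)) = A n + slog (x n) / 2 := by
      unfold MnOf; ring
    have hal : a n ≤ a n + w n * slog (x n) := by
      have : 0 ≤ w n * slog (x n) := mul_nonneg (hwnn n) h1.le
      linarith
    have hlen : (a n + w n * slog (x n)) - a n ≤ slog (x n) / 8 := by
      have : w n * slog (x n) ≤ (1 / 8) * slog (x n) :=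
        mul_le_mul_of_nonneg_right h2 h1.le
      linarith
    have hf : (fun ω => clamp (A n) (A n + slog (x n)) (T (fun e => t e ω) 0 (x n)))
        =ᵐ[μ] fun ω => clamp (A n) (A n + slog (x n)) (T (fun e => tm e ω) 0 (x n)) := by
      filter_upwards [hTae (x n)] with ω hω
      rw [hω]
    have hkey := key_interval μ t d0 K hG
      (fun ω => T (fun e => tm e ω) 0 (x n)) (hTm (x n))
      (a n) (a n + w n * slog (x n)) (A n) (slog (x n)) (MnOf (A n) (slog (x n)))
      h1 hal hlen hM h3 _ hf (hmed n)
    exact hkey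
  -- squeeze
  have hlow : ∀ᶠ n in atTop, μ {ω | T (fun e => t e ω) 0 (x n) ∈
      Set.Icc (a n) (a n + w n * slog (x n))} ≤ μ {ω | T (fun e => t e ω) 0 (x n) ∈
      In' (MnOf (A n) (slog (x n))) (slog (x n))} := by
    filter_upwards [hsubset] with n hn
    exact measure_mono fun ω hω => hn hω
  have hup : ∀ᶠ n in atTop, μ {ω | T (fun e => t e ω) 0 (x n) ∈
      In' (MnOf (A n) (slog (x n))) (slog (x n))} ≤ 1 :=
    Filter.Eventually.of_forall fun n => prob_le_one
  exact tendsto_of_tendsto_of_tendsto_of_le_of_le' hass tendsto_const_nhds hlow hup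

end FPPPaper
end
end
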